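/- arXiv:2010.15359 — 3 statements merged into one kernel-verified Lean document; each statement's English description precedes it below -/
import Mathlib

section
/- For every g ≥ 1, the integral symplectic group Sp(2g,ℤ) acts transitively on the primitive vectors of ℤ^{2g}: for any two primitive vectors v, w ∈ ℤ^{2g} there exists a matrix M ∈ Sp(2g,ℤ) with M·v = w. -/
open scoped BigOperators

/-- The standard symplectic form
`ω(x,y) = Σ_{i=0}^{g-1} (x_{2i}·y_{2i+1} − x_{2i+1}·y_{2i})` on `R^{2g}`. -/
def stdSymp {R : Type*} [CommRing R] (g : ℕ) (x y : Fin (2 * g) → R) : R :=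
  ∑ i : Fin g,
    (x ⟨2 * i.val, by have := i.isLt; omega⟩ * y ⟨2 * i.val + 1, by have := i.isLt; omega⟩
      - x ⟨2 * i.val + 1, by have := i.isLt; omega⟩ * y ⟨2 * i.val, by have := i.isLt; omega⟩)

namespace SpAux

variable {g : ℕ}

def p0 (i : Fin g) : Fin (2 * g) := ⟨2 * i.val, by have := i.isLt; omega⟩
def p1 (i : Fin g) : Fin (2 * g) := ⟨2 * i.val + 1, by have := i.isLt; omega⟩

lemma p0_ne_p1 (i j : Fin g) : p0 i ≠ p1 j := by
  simp only [p0, p1, Ne, Fin.mk.injEq]; omega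

lemma p1_ne_p0 (i j : Fin g) : p1 i ≠ p0 j := by
  simp only [p0, p1, Ne, Fin.mk.injEq]; omega

lemma p0_inj {i j : Fin g} (h : p0 i = p0 j) : i = j := by
  simp only [p0, Fin.mk.injEq] at h; exact Fin.ext (by omega)

lemma p1_inj {i j : Fin g} (h : p1 i = p1 j) : i = j := by
  simp only [p1, Fin.mk.injEq] at h; exact Fin.ext (by omega)

lemma p0_ne_p0 {i j : Fin g} (h : i ≠ j) : p0 i ≠ p0 j := fun hh => h (p0_inj hh)
lemma p1_ne_p1 {i j : Fin g} (h : i ≠ j) : p1 i ≠ p1 j := fun hh => h (p1_inj hh)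

lemma pair_exhaust (j : Fin (2 * g)) : ∃ i : Fin g, j = p0 i ∨ j = p1 i := by
  refine ⟨⟨j.val / 2, by have := j.isLt; omega⟩, ?_⟩
  rcases Nat.even_or_odd j.val with ⟨k, hk⟩ | ⟨k, hk⟩
  · left; simp only [p0]; exact Fin.ext (by simp; omega)
  · right; simp only [p1]; exact Fin.ext (by simp; omega)

lemma stdSymp_def (x y : Fin (2 * g) → ℤ) :
    stdSymp g x y = ∑ i : Fin g, (x (p0 i) * y (p1 i) - x (p1 i) * y (p0 i)) := rfl

lemma omega_add_left (x x' y : Fin (2 * g) → ℤ) :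
    stdSymp g (x + x') y = stdSymp g x y + stdSymp g x' y := by
  simp only [stdSymp_def, Pi.add_apply, ← Finset.sum_add_distrib]
  exact Finset.sum_congr rfl fun i _ => by ring

lemma omega_add_right (x y y' : Fin (2 * g) → ℤ) :
    stdSymp g x (y + y') = stdSymp g x y + stdSymp g x y' := by
  simp only [stdSymp_def, Pi.add_apply, ← Finset.sum_add_distrib]
  exact Finset.sum_congr rfl fun i _ => by ring

lemma omega_smul_left (c : ℤ) (x y : Fin (2 * g) → ℤ) :
    stdSymp g (c • x) y = c * stdSymp g x y := by
  simp only [stdSymp_def, Pi.smul_apply, smul_eq_mul, Finset.mul_sum]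
  exact Finset.sum_congr rfl fun i _ => by ring

lemma omega_smul_right (c : ℤ) (x y : Fin (2 * g) → ℤ) :
    stdSymp g x (c • y) = c * stdSymp g x y := by
  simp only [stdSymp_def, Pi.smul_apply, smul_eq_mul, Finset.mul_sum]
  exact Finset.sum_congr rfl fun i _ => by ring

lemma omega_zero_left (y : Fin (2 * g) → ℤ) : stdSymp g 0 y = 0 := by
  simp [stdSymp_def]

lemma omega_self (x : Fin (2 * g) → ℤ) : stdSymp g x x = 0 := by
  simp only [stdSymp_def]
  rw [Finset.sum_eq_zero]; intro i _; ring

lemma omega_skew (x y : Fin (2 * g) → ℤ) : stdSymp g x y = -stdSymp g y x := by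
  simp only [stdSymp_def, ← Finset.sum_neg_distrib]
  exact Finset.sum_congr rfl fun i _ => by ring

lemma omega_single0_right (x : Fin (2 * g) → ℤ) (i : Fin g) (c : ℤ) :
    stdSymp g x (Pi.single (p0 i) c) = -(x (p1 i) * c) := by
  rw [stdSymp_def, Finset.sum_eq_single i]
  · rw [Pi.single_eq_same, Pi.single_eq_of_ne (p1_ne_p0 i i)]; ring
  · intro b _ hb
    rw [Pi.single_eq_of_ne (p1_ne_p0 b i), Pi.single_eq_of_ne (p0_ne_p0 hb)]; ring
  · simp

lemma omega_single1_right (x : Fin (2 * g) → ℤ) (i : Fin g) (c : ℤ) :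
    stdSymp g x (Pi.single (p1 i) c) = x (p0 i) * c := by
  rw [stdSymp_def, Finset.sum_eq_single i]
  · rw [Pi.single_eq_same, Pi.single_eq_of_ne (p0_ne_p1 i i)]; ring
  · intro b _ hb
    rw [Pi.single_eq_of_ne (p0_ne_p1 b i), Pi.single_eq_of_ne (p1_ne_p1 hb)]; ring
  · simp

lemma omega_sum_left {α : Type*} (s : Finset α) (f : α → Fin (2 * g) → ℤ) (y : Fin (2 * g) → ℤ) :
    stdSymp g (∑ k ∈ s, f k) y = ∑ k ∈ s, stdSymp g (f k) y := by
  induction s using Finset.cons_induction with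
  | empty => simp [omega_zero_left]
  | cons a s ha ih => rw [Finset.sum_cons, Finset.sum_cons, omega_add_left, ih]

lemma omega_expand (x y : Fin (2 * g) → ℤ) :
    stdSymp g x y = ∑ k : Fin (2 * g), x k * stdSymp g (Pi.single k (1:ℤ)) y := by
  conv_lhs => rw [← Finset.univ_sum_single x]
  rw [omega_sum_left]
  refine Finset.sum_congr rfl fun k _ => ?_
  rw [← omega_smul_left]
  congr 1
  funext j
  by_cases h : j = k
  · subst h; simp
  · simp [Pi.single_eq_of_ne h]


lemma omega_shift (x y u : Fin (2 * g) → ℤ) (c d : ℤ) :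
    stdSymp g (x + c • u) (y + d • u)
      = stdSymp g x y + d * stdSymp g x u + c * stdSymp g u y + c * d * stdSymp g u u := by
  rw [omega_add_left, omega_add_right, omega_add_right, omega_smul_left, omega_smul_left,
    omega_smul_right, omega_smul_right]
  ring

lemma sub_smul_eq (x u : Fin (2 * g) → ℤ) (c : ℤ) : x - c • u = x + (-c) • u := by
  funext j; simp; ring

/-- Transvection matrix: `x ↦ x + ω(x,u)·u`. -/
def Tv (u : Fin (2 * g) → ℤ) : Matrix (Fin (2 * g)) (Fin (2 * g)) ℤ :=
  Matrix.of fun j k => (if j = k then 1 else 0) + u j * stdSymp g (Pi.single k 1) u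

/-- Inverse transvection: `x ↦ x − ω(x,u)·u`. -/
def Sv (u : Fin (2 * g) → ℤ) : Matrix (Fin (2 * g)) (Fin (2 * g)) ℤ :=
  Matrix.of fun j k => (if j = k then 1 else 0) - u j * stdSymp g (Pi.single k 1) u

lemma Tv_mulVec (u x : Fin (2 * g) → ℤ) :
    (Tv u).mulVec x = x + stdSymp g x u • u := by
  funext j
  simp only [Tv, Matrix.mulVec, dotProduct, Matrix.of_apply, Pi.add_apply,
    Pi.smul_apply, smul_eq_mul]
  rw [Finset.sum_congr rfl (fun k _ => add_mul (if j = k then 1 else 0)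
    (u j * stdSymp g (Pi.single k 1) u) (x k)), Finset.sum_add_distrib]
  congr 1
  · simp [Finset.sum_ite_eq]
  · rw [omega_expand x u, Finset.sum_mul]
    exact Finset.sum_congr rfl fun k _ => by ring

lemma Sv_mulVec (u x : Fin (2 * g) → ℤ) :
    (Sv u).mulVec x = x - stdSymp g x u • u := by
  funext j
  simp only [Sv, Matrix.mulVec, dotProduct, Matrix.of_apply, Pi.sub_apply,
    Pi.smul_apply, smul_eq_mul]
  rw [Finset.sum_congr rfl (fun k _ => sub_mul (if j = k then 1 else 0)
    (u j * stdSymp g (Pi.single k 1) u) (x k)), Finset.sum_sub_distrib]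
  congr 1
  · simp [Finset.sum_ite_eq]
  · rw [omega_expand x u, Finset.sum_mul]
    exact Finset.sum_congr rfl fun k _ => by ring

lemma eq_one_of_mulVec {A : Matrix (Fin (2 * g)) (Fin (2 * g)) ℤ}
    (h : ∀ x, A.mulVec x = x) : A = 1 := by
  ext j k
  have := congrFun (h (Pi.single k 1)) j
  simp only [Matrix.mulVec_single_one, Matrix.col_apply] at this
  rw [this, Matrix.one_apply, Pi.single_apply]

lemma omega_T_pres (u x y : Fin (2 * g) → ℤ) :
    stdSymp g ((Tv u).mulVec x) ((Tv u).mulVec y) = stdSymp g x y := by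
  rw [Tv_mulVec, Tv_mulVec, omega_shift, omega_self, omega_skew u y]
  ring

lemma omega_S_pres (u x y : Fin (2 * g) → ℤ) :
    stdSymp g ((Sv u).mulVec x) ((Sv u).mulVec y) = stdSymp g x y := by
  rw [Sv_mulVec, Sv_mulVec, sub_smul_eq, sub_smul_eq, omega_shift, omega_self,
    omega_skew u y]
  ring

lemma omega_sub_u (x u : Fin (2 * g) → ℤ) (c : ℤ) :
    stdSymp g (x - c • u) u = stdSymp g x u - c * stdSymp g u u := by
  rw [sub_smul_eq, omega_add_left, omega_smul_left]; ring

lemma omega_add_u (x u : Fin (2 * g) → ℤ) (c : ℤ) :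
    stdSymp g (x + c • u) u = stdSymp g x u + c * stdSymp g u u := by
  rw [omega_add_left, omega_smul_left]

lemma Tv_Sv (u : Fin (2 * g) → ℤ) : Tv u * Sv u = 1 := by
  apply eq_one_of_mulVec
  intro x
  rw [← Matrix.mulVec_mulVec, Sv_mulVec, Tv_mulVec, omega_sub_u, omega_self]
  funext j
  simp only [Pi.add_apply, Pi.sub_apply, Pi.smul_apply, smul_eq_mul]
  ring

lemma Sv_Tv (u : Fin (2 * g) → ℤ) : Sv u * Tv u = 1 := by
  apply eq_one_of_mulVec
  intro x
  rw [← Matrix.mulVec_mulVec, Tv_mulVec, Sv_mulVec, omega_add_u, omega_self]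
  funext j
  simp only [Pi.add_apply, Pi.sub_apply, Pi.smul_apply, smul_eq_mul]
  ring

def IsSp (M : Matrix (Fin (2 * g)) (Fin (2 * g)) ℤ) : Prop :=
  (∀ x y, stdSymp g (M.mulVec x) (M.mulVec y) = stdSymp g x y) ∧
    ∃ N, M * N = 1 ∧ N * M = 1

lemma isSp_Tv (u : Fin (2 * g) → ℤ) : IsSp (Tv u) :=
  ⟨omega_T_pres u, Sv u, Tv_Sv u, Sv_Tv u⟩

lemma isSp_Sv (u : Fin (2 * g) → ℤ) : IsSp (Sv u) :=
  ⟨omega_S_pres u, Tv u, Sv_Tv u, Tv_Sv u⟩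

/-- Reachability under integral symplectic matrices. -/
def Rel (v w : Fin (2 * g) → ℤ) : Prop :=
  ∃ M, IsSp M ∧ M.mulVec v = w

lemma rel_refl (v : Fin (2 * g) → ℤ) : Rel v v :=
  ⟨1, ⟨fun x y => by rw [Matrix.one_mulVec, Matrix.one_mulVec], 1, one_mul 1, one_mul 1⟩,
    Matrix.one_mulVec v⟩

lemma rel_trans {v w z : Fin (2 * g) → ℤ} (h1 : Rel v w) (h2 : Rel w z) : Rel v z := by
  obtain ⟨M, ⟨hM, N, hMN, hNM⟩, hMv⟩ := h1
  obtain ⟨M', ⟨hM', N', hMN', hNM'⟩, hM'w⟩ := h2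
  refine ⟨M' * M, ⟨?_, N * N', ?_, ?_⟩, ?_⟩
  · intro x y
    rw [← Matrix.mulVec_mulVec, ← Matrix.mulVec_mulVec, hM', hM]
  · calc M' * M * (N * N') = M' * (M * N) * N' := by simp only [mul_assoc]
      _ = 1 := by rw [hMN, mul_one, hMN']
  · calc N * N' * (M' * M) = N * (N' * M') * M := by simp only [mul_assoc]
      _ = 1 := by rw [hNM', mul_one, hNM]
  · rw [← Matrix.mulVec_mulVec, hMv, hM'w]

lemma rel_symm {v w : Fin (2 * g) → ℤ} (h : Rel v w) : Rel w v := by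
  obtain ⟨M, ⟨hM, N, hMN, hNM⟩, hMv⟩ := h
  refine ⟨N, ⟨?_, M, hNM, hMN⟩, ?_⟩
  · intro x y
    have := hM (N.mulVec x) (N.mulVec y)
    rw [Matrix.mulVec_mulVec, Matrix.mulVec_mulVec, hMN, Matrix.one_mulVec,
      Matrix.one_mulVec] at this
    exact this.symm
  · rw [← hMv, Matrix.mulVec_mulVec, hNM, Matrix.one_mulVec]

lemma rel_T (v u : Fin (2 * g) → ℤ) : Rel v (v + stdSymp g v u • u) :=
  ⟨Tv u, isSp_Tv u, Tv_mulVec u v⟩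

lemma rel_S (v u : Fin (2 * g) → ℤ) : Rel v (v - stdSymp g v u • u) :=
  ⟨Sv u, isSp_Sv u, Sv_mulVec u v⟩

lemma rel_primitive {v w : Fin (2 * g) → ℤ} (h : Rel v w)
    (hv : ∀ d : ℤ, (∀ i, d ∣ v i) → IsUnit d) :
    ∀ d : ℤ, (∀ i, d ∣ w i) → IsUnit d := by
  obtain ⟨M, ⟨_, N, hMN, hNM⟩, hMv⟩ := h
  intro d hd
  apply hv
  intro i
  have hv' : v = N.mulVec w := by
    rw [← hMv, Matrix.mulVec_mulVec, hNM, Matrix.one_mulVec]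
  rw [hv']
  simp only [Matrix.mulVec, dotProduct]
  exact Finset.dvd_sum fun k _ => Dvd.dvd.mul_left (hd k) _


/-! ### Coordinate moves -/

lemma move_sub0 (i : Fin g) (v : Fin (2 * g) → ℤ) :
    Rel v (Function.update v (p0 i) (v (p0 i) - v (p1 i))) := by
  have h := rel_T v (Pi.single (p0 i) (1:ℤ))
  rw [omega_single0_right] at h
  have e : v + (-(v (p1 i) * 1)) • Pi.single (p0 i) (1:ℤ)
      = Function.update v (p0 i) (v (p0 i) - v (p1 i)) := by
    funext k
    simp only [Function.update_apply, Pi.add_apply, Pi.smul_apply, Pi.single_apply, smul_eq_mul]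
    by_cases hk : k = p0 i <;> simp [hk] <;> ring
  rwa [e] at h

lemma move_add0 (i : Fin g) (v : Fin (2 * g) → ℤ) :
    Rel v (Function.update v (p0 i) (v (p0 i) + v (p1 i))) := by
  have h := rel_S v (Pi.single (p0 i) (1:ℤ))
  rw [omega_single0_right] at h
  have e : v - (-(v (p1 i) * 1)) • Pi.single (p0 i) (1:ℤ)
      = Function.update v (p0 i) (v (p0 i) + v (p1 i)) := by
    funext k
    simp only [Function.update_apply, Pi.sub_apply, Pi.smul_apply, Pi.single_apply, smul_eq_mul]
    by_cases hk : k = p0 i <;> simp [hk] <;> ring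
  rwa [e] at h

lemma move_add1 (i : Fin g) (v : Fin (2 * g) → ℤ) :
    Rel v (Function.update v (p1 i) (v (p1 i) + v (p0 i))) := by
  have h := rel_T v (Pi.single (p1 i) (1:ℤ))
  rw [omega_single1_right] at h
  have e : v + (v (p0 i) * 1) • Pi.single (p1 i) (1:ℤ)
      = Function.update v (p1 i) (v (p1 i) + v (p0 i)) := by
    funext k
    simp only [Function.update_apply, Pi.add_apply, Pi.smul_apply, Pi.single_apply, smul_eq_mul]
    by_cases hk : k = p1 i <;> simp [hk] <;> ring
  rwa [e] at h

lemma move_sub1 (i : Fin g) (v : Fin (2 * g) → ℤ) :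
    Rel v (Function.update v (p1 i) (v (p1 i) - v (p0 i))) := by
  have h := rel_S v (Pi.single (p1 i) (1:ℤ))
  rw [omega_single1_right] at h
  have e : v - (v (p0 i) * 1) • Pi.single (p1 i) (1:ℤ)
      = Function.update v (p1 i) (v (p1 i) - v (p0 i)) := by
    funext k
    simp only [Function.update_apply, Pi.sub_apply, Pi.smul_apply, Pi.single_apply, smul_eq_mul]
    by_cases hk : k = p1 i <;> simp [hk] <;> ring
  rwa [e] at h

/-- Cross move on odd coordinates: adds `v(p0 i) + v(p0 j)` to both `p1 i` and `p1 j`. -/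
lemma move_cross1 {i j : Fin g} (hij : i ≠ j) (v : Fin (2 * g) → ℤ) :
    Rel v (fun k => if k = p1 i then v (p1 i) + (v (p0 i) + v (p0 j))
      else if k = p1 j then v (p1 j) + (v (p0 i) + v (p0 j)) else v k) := by
  have h := rel_T v (Pi.single (p1 i) (1:ℤ) + Pi.single (p1 j) (1:ℤ))
  rw [omega_add_right, omega_single1_right, omega_single1_right] at h
  have e : v + (v (p0 i) * 1 + v (p0 j) * 1) • (Pi.single (p1 i) (1:ℤ) + Pi.single (p1 j) 1)
      = fun k => if k = p1 i then v (p1 i) + (v (p0 i) + v (p0 j))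
        else if k = p1 j then v (p1 j) + (v (p0 i) + v (p0 j)) else v k := by
    funext k
    simp only [Pi.add_apply, Pi.smul_apply, Pi.single_apply, smul_eq_mul]
    by_cases hk : k = p1 i
    · simp [hk, p1_ne_p1 hij, p1_ne_p1 (Ne.symm hij)] <;> ring
    · by_cases hk' : k = p1 j
      · simp [hk, hk', p1_ne_p1 hij, p1_ne_p1 (Ne.symm hij)] <;> ring
      · simp [hk, hk']
  rwa [e] at h

/-- Iterated even cross move: subtracts `t·(v(p1 i)+v(p1 j))` from both `p0 i` and `p0 j`. -/
lemma kill_iter {i j : Fin g} (hij : i ≠ j) (t : ℤ) (v : Fin (2 * g) → ℤ) :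
    Rel v (fun k => if k = p0 i then v (p0 i) - t * (v (p1 i) + v (p1 j))
      else if k = p0 j then v (p0 j) - t * (v (p1 i) + v (p1 j)) else v k) := by
  induction t using Int.induction_on with
  | zero =>
    have e : (fun k => if k = p0 i then v (p0 i) - 0 * (v (p1 i) + v (p1 j))
        else if k = p0 j then v (p0 j) - 0 * (v (p1 i) + v (p1 j)) else v k) = v := by
      funext k
      by_cases hk : k = p0 i
      · simp [hk]
      · by_cases hk' : k = p0 j <;> simp [hk, hk', p0_ne_p0 (Ne.symm hij)]
    rw [e]; exact rel_refl v
  | succ t ih =>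
    refine rel_trans ih ?_
    set w := (fun k => if k = p0 i then v (p0 i) - (t:ℤ) * (v (p1 i) + v (p1 j))
      else if k = p0 j then v (p0 j) - (t:ℤ) * (v (p1 i) + v (p1 j)) else v k) with hw
    have h := rel_T w (Pi.single (p0 i) (1:ℤ) + Pi.single (p0 j) (1:ℤ))
    rw [omega_add_right, omega_single0_right, omega_single0_right] at h
    have hwi : w (p1 i) = v (p1 i) := by
      simp [hw, p1_ne_p0]
    have hwj : w (p1 j) = v (p1 j) := by
      simp [hw, p1_ne_p0]
    have e : w + (-(w (p1 i) * 1) + -(w (p1 j) * 1)) •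
        (Pi.single (p0 i) (1:ℤ) + Pi.single (p0 j) 1)
        = fun k => if k = p0 i then v (p0 i) - ((t:ℤ)+1) * (v (p1 i) + v (p1 j))
          else if k = p0 j then v (p0 j) - ((t:ℤ)+1) * (v (p1 i) + v (p1 j)) else v k := by
      funext k
      simp only [Pi.add_apply, Pi.smul_apply, Pi.single_apply, smul_eq_mul]
      rw [hwi, hwj]
      by_cases hk : k = p0 i
      · simp [hw, hk, p0_ne_p0 hij, p0_ne_p0 (Ne.symm hij)] <;> ring
      · by_cases hk' : k = p0 j
        · simp [hw, hk, hk', p0_ne_p0 hij, p0_ne_p0 (Ne.symm hij)] <;> ring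
        · simp [hw, hk, hk']
    rwa [e] at h
  | pred t ih =>
    refine rel_trans ih ?_
    set w := (fun k => if k = p0 i then v (p0 i) - (-t:ℤ) * (v (p1 i) + v (p1 j))
      else if k = p0 j then v (p0 j) - (-t:ℤ) * (v (p1 i) + v (p1 j)) else v k) with hw
    have h := rel_S w (Pi.single (p0 i) (1:ℤ) + Pi.single (p0 j) (1:ℤ))
    rw [omega_add_right, omega_single0_right, omega_single0_right] at h
    have hwi : w (p1 i) = v (p1 i) := by
      simp [hw, p1_ne_p0]
    have hwj : w (p1 j) = v (p1 j) := by
      simp [hw, p1_ne_p0]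
    have e : w - (-(w (p1 i) * 1) + -(w (p1 j) * 1)) •
        (Pi.single (p0 i) (1:ℤ) + Pi.single (p0 j) 1)
        = fun k => if k = p0 i then v (p0 i) - (-t-1:ℤ) * (v (p1 i) + v (p1 j))
          else if k = p0 j then v (p0 j) - (-t-1:ℤ) * (v (p1 i) + v (p1 j)) else v k := by
      funext k
      simp only [Pi.add_apply, Pi.sub_apply, Pi.smul_apply, Pi.single_apply, smul_eq_mul]
      rw [hwi, hwj]
      by_cases hk : k = p0 i
      · simp [hw, hk, p0_ne_p0 hij, p0_ne_p0 (Ne.symm hij)] <;> ring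
      · by_cases hk' : k = p0 j
        · simp [hw, hk, hk', p0_ne_p0 hij, p0_ne_p0 (Ne.symm hij)] <;> ring
        · simp [hw, hk, hk']
    rwa [e] at h

/-- Iterated shear on a pair: `v(p0 i) ↦ v(p0 i) − t·v(p1 i)`. -/
lemma shear_iter (i : Fin g) (t : ℤ) (v : Fin (2 * g) → ℤ) :
    Rel v (Function.update v (p0 i) (v (p0 i) - t * v (p1 i))) := by
  induction t using Int.induction_on with
  | zero =>
    have e : Function.update v (p0 i) (v (p0 i) - 0 * v (p1 i)) = v := by
      funext k
      by_cases hk : k = p0 i <;> simp [Function.update_apply, hk]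
    rw [e]; exact rel_refl v
  | succ t ih =>
    refine rel_trans ih ?_
    set w := Function.update v (p0 i) (v (p0 i) - (t:ℤ) * v (p1 i)) with hw
    have h := move_sub0 i w
    have hwi : w (p1 i) = v (p1 i) := by
      simp [hw, Function.update_apply, p1_ne_p0]
    have e : Function.update w (p0 i) (w (p0 i) - w (p1 i))
        = Function.update v (p0 i) (v (p0 i) - ((t:ℤ)+1) * v (p1 i)) := by
      funext k
      by_cases hk : k = p0 i
      · subst hk
        simp [hw, Function.update_apply, p1_ne_p0] <;> ring
      · simp [Function.update_apply, hk, hw]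
    rwa [e] at h
  | pred t ih =>
    refine rel_trans ih ?_
    set w := Function.update v (p0 i) (v (p0 i) - (-t:ℤ) * v (p1 i)) with hw
    have h := move_add0 i w
    have hwi : w (p1 i) = v (p1 i) := by
      simp [hw, Function.update_apply, p1_ne_p0]
    have e : Function.update w (p0 i) (w (p0 i) + w (p1 i))
        = Function.update v (p0 i) (v (p0 i) - (-t-1:ℤ) * v (p1 i)) := by
      funext k
      by_cases hk : k = p0 i
      · subst hk
        simp [hw, Function.update_apply, p1_ne_p0] <;> ring
      · simp [Function.update_apply, hk, hw]
    rwa [e] at h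


lemma natAbs_emod_lt (a : ℤ) {b : ℤ} (hb : b ≠ 0) : (a % b).natAbs < b.natAbs := by
  have h1 : 0 ≤ a % b := Int.emod_nonneg a hb
  rcases hb.lt_or_gt with h | h
  · have e : a % b = a % (-(-b)) := by ring_nf
    have e2 : a % (-(-b)) = a % (-b) := Int.emod_neg a (-b)
    have h2 : a % (-b) < -b := Int.emod_lt_of_pos a (by omega)
    omega
  · have h2 : a % b < b := Int.emod_lt_of_pos a h
    omega

/-- Euclidean algorithm within the `i`-th symplectic pair. -/
lemma euclid (i : Fin g) :
    ∀ (N : ℕ) (v : Fin (2 * g) → ℤ), (v (p1 i)).natAbs ≤ N →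
    ∃ w : Fin (2 * g) → ℤ, Rel v w ∧ w (p1 i) = 0 ∧
      (∀ j, j ≠ p0 i → j ≠ p1 i → w j = v j) ∧
      w (p0 i) ∣ v (p0 i) ∧ w (p0 i) ∣ v (p1 i) ∧
      ∀ e : ℤ, e ∣ v (p0 i) → e ∣ v (p1 i) → e ∣ w (p0 i) := by
  intro N
  induction N with
  | zero =>
    intro v hv
    have hb : v (p1 i) = 0 := by omega
    exact ⟨v, rel_refl v, hb, fun j _ _ => rfl, dvd_rfl, hb ▸ dvd_zero _, fun e he _ => he⟩
  | succ N IH =>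
    intro v hv
    by_cases hb : v (p1 i) = 0
    · exact ⟨v, rel_refl v, hb, fun j _ _ => rfl, dvd_rfl, hb ▸ dvd_zero _, fun e he _ => he⟩
    · set a := v (p0 i) with ha
      set b := v (p1 i) with hbdef
      set q := a / b with hq
      set r := a % b with hr
      have hrval : a - q * b = r := by rw [hr, Int.emod_def]; ring
      have step1 := shear_iter i q v
      rw [← hbdef, ← ha, hrval] at step1
      set v₁ := Function.update v (p0 i) r with hv₁
      have hv₁0 : v₁ (p0 i) = r := by simp [hv₁]
      have hv₁1 : v₁ (p1 i) = b := by simp [hv₁, Function.update_apply, p1_ne_p0, hbdef]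
      set v₂ := Function.update v₁ (p0 i) (v₁ (p0 i) - v₁ (p1 i)) with hv₂
      have step2 := move_sub0 i v₁
      have hv₂0 : v₂ (p0 i) = r - b := by simp [hv₂, hv₁0, hv₁1]
      have hv₂1 : v₂ (p1 i) = b := by
        simp [hv₂, Function.update_apply, p1_ne_p0, hv₁1]
      set v₃ := Function.update v₂ (p1 i) (v₂ (p1 i) + v₂ (p0 i)) with hv₃
      have step3 := move_add1 i v₂
      have hv₃0 : v₃ (p0 i) = r - b := by
        simp [hv₃, Function.update_apply, p0_ne_p1, hv₂0]
      have hv₃1 : v₃ (p1 i) = r := by simp [hv₃, hv₂0, hv₂1] <;> ring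
      set v₄ := Function.update v₃ (p0 i) (v₃ (p0 i) - v₃ (p1 i)) with hv₄
      have step4 := move_sub0 i v₃
      have hv₄0 : v₄ (p0 i) = -b := by simp [hv₄, hv₃0, hv₃1] <;> ring
      have hv₄1 : v₄ (p1 i) = r := by
        simp [hv₄, Function.update_apply, p1_ne_p0, hv₃1]
      have houter : ∀ j, j ≠ p0 i → j ≠ p1 i → v₄ j = v j := by
        intro j hj0 hj1
        simp [hv₄, hv₃, hv₂, hv₁, Function.update_apply, hj0, hj1]
      have hrel4 : Rel v v₄ := rel_trans step1 (rel_trans step2 (rel_trans step3 step4))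
      have hbound : (v₄ (p1 i)).natAbs ≤ N := by
        rw [hv₄1]
        have := natAbs_emod_lt a (show b ≠ 0 from hb)
        rw [← hr] at this
        omega
      obtain ⟨w, hwrel, hw1, hwout, hwd0, hwd1, hwconv⟩ := IH v₄ hbound
      refine ⟨w, rel_trans hrel4 hwrel, hw1, ?_, ?_, ?_, ?_⟩
      · intro j hj0 hj1
        rw [hwout j hj0 hj1, houter j hj0 hj1]
      · -- w (p0 i) ∣ a
        have hdb : w (p0 i) ∣ b := by
          have := hwd0; rw [hv₄0] at this; exact (dvd_neg).mp this
        have hdr : w (p0 i) ∣ r := by have := hwd1; rwa [hv₄1] at this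
        have heq : b * q + r = a := by rw [hq, hr]; exact Int.mul_ediv_add_emod a b
        calc w (p0 i) ∣ b * q + r := dvd_add (hdb.mul_right q) hdr
          _ = a := heq
      · -- w (p0 i) ∣ b
        have := hwd0; rw [hv₄0] at this
        exact (dvd_neg).mp this
      · intro e hea heb
        apply hwconv
        · rw [hv₄0]; exact (dvd_neg).mpr heb
        · rw [hv₄1, hr, Int.emod_def]
          exact dvd_sub hea (heb.mul_right _)


/-- Step 1: clear all odd coordinates. -/
lemma clear_odds :
    ∀ (d m : ℕ), m + d = g → ∀ v : Fin (2 * g) → ℤ,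
      (∀ i : Fin g, i.val < m → v (p1 i) = 0) →
      ∃ w, Rel v w ∧ ∀ i : Fin g, w (p1 i) = 0 := by
  intro d
  induction d with
  | zero =>
    intro m hm v hv
    exact ⟨v, rel_refl v, fun i => hv i (by have := i.isLt; omega)⟩
  | succ d IH =>
    intro m hm v hv
    have hmg : m < g := by omega
    set i : Fin g := ⟨m, hmg⟩ with hidef
    obtain ⟨w₁, hrel, h1, hout, -, -, -⟩ := euclid i ((v (p1 i)).natAbs) v le_rfl
    have hhyp : ∀ i' : Fin g, i'.val < m + 1 → w₁ (p1 i') = 0 := by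
      intro i' hi'
      by_cases hcase : i' = i
      · subst hcase; exact h1
      · rw [hout (p1 i') (p1_ne_p0 i' i) (p1_ne_p1 hcase)]
        apply hv
        have : i'.val ≠ m := by
          intro hh; exact hcase (Fin.ext (by rw [hh]))
        omega
    obtain ⟨w, hrel', hw⟩ := IH (m + 1) (by omega) w₁ hhyp
    exact ⟨w, rel_trans hrel hrel', hw⟩

/-- Step 2: absorb all even coordinates into the first one. -/
lemma absorb (i0 : Fin g) (hi0 : i0.val = 0) :
    ∀ (d m : ℕ), m + d = g → 1 ≤ m → ∀ v : Fin (2 * g) → ℤ,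
      (∀ i : Fin g, v (p1 i) = 0) →
      (∀ i : Fin g, 1 ≤ i.val → i.val < m → v (p0 i) = 0) →
      ∃ w, Rel v w ∧ (∀ i : Fin g, w (p1 i) = 0) ∧
        ∀ i : Fin g, 1 ≤ i.val → w (p0 i) = 0 := by
  intro d
  induction d with
  | zero =>
    intro m hm _ v hodd heven
    exact ⟨v, rel_refl v, hodd, fun i h1 => heven i h1 (by have := i.isLt; omega)⟩
  | succ d IH =>
    intro m hm hm1 v hodd heven
    have hmg : m < g := by omega
    set j : Fin g := ⟨m, hmg⟩ with hjdef
    have hne : i0 ≠ j := by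
      intro hh
      have : i0.val = m := by rw [hh]
      omega
    have hji0 : j ≠ i0 := Ne.symm hne
    set a := v (p0 i0) with ha
    set b := v (p0 j) with hb
    -- s1 : cross move
    have s1 := move_cross1 hne v
    set v₁ := (fun k => if k = p1 i0 then v (p1 i0) + (v (p0 i0) + v (p0 j))
      else if k = p1 j then v (p1 j) + (v (p0 i0) + v (p0 j)) else v k) with hv₁
    have hv₁p1i0 : v₁ (p1 i0) = a + b := by simp [hv₁, hodd i0, ha, hb]
    have hv₁p1j : v₁ (p1 j) = a + b := by
      simp [hv₁, p1_ne_p1 hji0, hodd j, ha, hb]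
    have hv₁p0i0 : v₁ (p0 i0) = a := by simp [hv₁, p0_ne_p1, ha]
    have hv₁p0j : v₁ (p0 j) = b := by simp [hv₁, p0_ne_p1, hb]
    have hv₁out : ∀ k, k ≠ p1 i0 → k ≠ p1 j → v₁ k = v k := by
      intro k h1 h2; simp [hv₁, h1, h2]
    -- s2 : euclid on pair i0 : (a, a+b) → (c, 0)
    obtain ⟨w₂, s2, hw₂1, hw₂out, hw₂d0, hw₂d1, hw₂conv⟩ :=
      euclid i0 ((v₁ (p1 i0)).natAbs) v₁ le_rfl
    set c := w₂ (p0 i0) with hc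
    have hcda : c ∣ a := by rw [← hv₁p0i0]; exact hw₂d0
    have hcdab : c ∣ a + b := by rw [← hv₁p1i0]; exact hw₂d1
    have hw₂p0j : w₂ (p0 j) = b := by
      rw [hw₂out (p0 j) (p0_ne_p0 hji0) (p0_ne_p1 j i0)]; exact hv₁p0j
    have hw₂p1j : w₂ (p1 j) = a + b := by
      rw [hw₂out (p1 j) (p1_ne_p0 j i0) (p1_ne_p1 hji0)]; exact hv₁p1j
    -- s3 : euclid on pair j : (b, a+b) → (c', 0)
    obtain ⟨w₃, s3, hw₃1, hw₃out, hw₃d0, hw₃d1, hw₃conv⟩ :=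
      euclid j ((w₂ (p1 j)).natAbs) w₂ le_rfl
    set c' := w₃ (p0 j) with hc'
    have hw₃p0i0 : w₃ (p0 i0) = c := by
      rw [hw₃out (p0 i0) (p0_ne_p0 hne) (p0_ne_p1 i0 j)]
    have hw₃p1i0 : w₃ (p1 i0) = 0 := by
      rw [hw₃out (p1 i0) (p1_ne_p0 i0 j) (p1_ne_p1 hne)]; exact hw₂1
    have hcc' : c ∣ c' := by
      apply hw₃conv
      · rw [hw₂p0j]
        exact (dvd_add_right hcda).mp hcdab
      · rw [hw₂p1j]; exact hcdab
    -- s4 : put c into p1 i0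
    have s4 := move_add1 i0 w₃
    set w₄ := Function.update w₃ (p1 i0) (w₃ (p1 i0) + w₃ (p0 i0)) with hw₄
    have hw₄p1i0 : w₄ (p1 i0) = c := by simp [hw₄, hw₃p1i0, hw₃p0i0]
    have hw₄p0i0 : w₄ (p0 i0) = c := by
      simp [hw₄, Function.update_apply, p0_ne_p1, hw₃p0i0]
    have hw₄p0j : w₄ (p0 j) = c' := by
      simp [hw₄, Function.update_apply, p0_ne_p1, hc']
    have hw₄p1j : w₄ (p1 j) = 0 := by
      simp [hw₄, Function.update_apply, p1_ne_p1 hji0, hw₃1]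
    -- s5 : kill p0 j
    obtain ⟨z, hz⟩ := hcc'
    have s5 := kill_iter hne z w₄
    set w₅ := (fun k => if k = p0 i0 then w₄ (p0 i0) - z * (w₄ (p1 i0) + w₄ (p1 j))
      else if k = p0 j then w₄ (p0 j) - z * (w₄ (p1 i0) + w₄ (p1 j)) else w₄ k) with hw₅
    have hw₅p0j : w₅ (p0 j) = 0 := by
      show (if p0 j = p0 i0 then _ else if p0 j = p0 j then _ else _) = 0
      rw [if_neg (p0_ne_p0 hji0), if_pos rfl, hw₄p0j, hw₄p1i0, hw₄p1j, hz]; ring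
    have hw₅p1i0 : w₅ (p1 i0) = c := by
      show (if p1 i0 = p0 i0 then _ else if p1 i0 = p0 j then _ else _) = c
      rw [if_neg (p1_ne_p0 i0 i0), if_neg (p1_ne_p0 i0 j)]
      exact hw₄p1i0
    have hw₅p1j : w₅ (p1 j) = 0 := by
      show (if p1 j = p0 i0 then _ else if p1 j = p0 j then _ else _) = 0
      rw [if_neg (p1_ne_p0 j i0), if_neg (p1_ne_p0 j j)]
      exact hw₄p1j
    have hw₅out : ∀ k, k ≠ p0 i0 → k ≠ p0 j → w₅ k = w₄ k := by
      intro k h1 h2; simp [hw₅, h1, h2]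
    -- s6 : clean pair i0 again
    obtain ⟨w₆, s6, hw₆1, hw₆out, -, -, -⟩ :=
      euclid i0 ((w₅ (p1 i0)).natAbs) w₅ le_rfl
    have hrel : Rel v w₆ :=
      rel_trans s1 (rel_trans s2 (rel_trans s3 (rel_trans s4 (rel_trans s5 s6))))
    -- verify the invariant at m+1
    have hhyp1 : ∀ i : Fin g, w₆ (p1 i) = 0 := by
      intro i
      by_cases hii0 : i = i0
      · subst hii0; exact hw₆1
      · rw [hw₆out (p1 i) (p1_ne_p0 i i0) (p1_ne_p1 hii0)]
        by_cases hij : i = j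
        · subst hij; exact hw₅p1j
        · rw [hw₅out (p1 i) (p1_ne_p0 i i0) (p1_ne_p0 i j)]
          rw [hw₄]
          rw [Function.update_apply, if_neg (p1_ne_p1 hii0)]
          rw [hw₃out (p1 i) (p1_ne_p0 i j) (p1_ne_p1 hij)]
          rw [hw₂out (p1 i) (p1_ne_p0 i i0) (p1_ne_p1 hii0)]
          rw [hv₁out (p1 i) (p1_ne_p1 hii0) (p1_ne_p1 hij)]
          exact hodd i
    have hhyp2 : ∀ i : Fin g, 1 ≤ i.val → i.val < m + 1 → w₆ (p0 i) = 0 := by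
      intro i h1 h2
      have hii0 : i ≠ i0 := by
        intro hh; rw [hh, hi0] at h1; omega
      by_cases hij : i = j
      · subst hij
        rw [hw₆out (p0 j) (p0_ne_p0 hji0) (p0_ne_p1 j i0)]
        exact hw₅p0j
      · have him : i.val < m := by
          have : i.val ≠ m := by
            intro hh; exact hij (Fin.ext (by rw [hh]))
          omega
        rw [hw₆out (p0 i) (p0_ne_p0 hii0) (p0_ne_p1 i i0)]
        rw [hw₅out (p0 i) (p0_ne_p0 hii0) (p0_ne_p0 hij)]
        rw [hw₄, Function.update_apply, if_neg (p0_ne_p1 i i0)]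
        rw [hw₃out (p0 i) (p0_ne_p0 hij) (p0_ne_p1 i j)]
        rw [hw₂out (p0 i) (p0_ne_p0 hii0) (p0_ne_p1 i i0)]
        rw [hv₁out (p0 i) (p0_ne_p1 i i0) (p0_ne_p1 i j)]
        exact heven i h1 him
    obtain ⟨w, hrel', hw⟩ := IH (m + 1) (by omega) (by omega) w₆ hhyp1 hhyp2
    exact ⟨w, rel_trans hrel hrel', hw⟩

/-- Every primitive vector is symplectically equivalent to the first basis vector. -/
lemma to_e0 (hg : 1 ≤ g) (v : Fin (2 * g) → ℤ)
    (hv : ∀ d : ℤ, (∀ i, d ∣ v i) → IsUnit d) :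
    Rel v (Pi.single (p0 (⟨0, hg⟩ : Fin g)) 1) := by
  set i0 : Fin g := ⟨0, hg⟩ with hi0def
  obtain ⟨w₁, r1, hw₁⟩ := clear_odds g 0 (by omega) v (fun i hi => absurd hi (by omega))
  obtain ⟨w₂, r2, hw₂odd, hw₂even⟩ :=
    absorb i0 rfl (g - 1) 1 (by omega) le_rfl w₁ hw₁ (fun i h1 h2 => absurd h2 (by omega))
  have hrel : Rel v w₂ := rel_trans r1 r2
  set dd := w₂ (p0 i0) with hdd
  have hprim := rel_primitive hrel hv
  have hcoords : ∀ k, k ≠ p0 i0 → w₂ k = 0 := by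
    intro k hk
    obtain ⟨i, hi | hi⟩ := pair_exhaust k
    · subst hi
      have : i ≠ i0 := fun hh => hk (by rw [hh])
      have : 1 ≤ i.val := by
        rcases Nat.eq_zero_or_pos i.val with h0 | h0
        · exact absurd (Fin.ext (by rw [h0])) this
        · exact h0
      exact hw₂even i this
    · subst hi; exact hw₂odd i
  have hdunit : IsUnit dd := by
    apply hprim
    intro k
    by_cases hk : k = p0 i0
    · rw [hk]
    · rw [hcoords k hk]; exact dvd_zero dd
  rw [Int.isUnit_iff] at hdunit
  rcases hdunit with h1 | hm1
  · have : w₂ = Pi.single (p0 i0) 1 := by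
      funext k
      by_cases hk : k = p0 i0
      · rw [hk, Pi.single_eq_same, ← h1, hdd]
      · rw [hcoords k hk, Pi.single_eq_of_ne hk]
    rwa [this] at hrel
  · -- d = -1 : flip the sign within pair i0
    have hp1 : w₂ (p1 i0) = 0 := hw₂odd i0
    have m1 := move_add1 i0 w₂
    set u₁ := Function.update w₂ (p1 i0) (w₂ (p1 i0) + w₂ (p0 i0)) with hu₁
    have hu₁p0 : u₁ (p0 i0) = -1 := by
      simp [hu₁, Function.update_apply, p0_ne_p1, ← hdd, hm1]
    have hu₁p1 : u₁ (p1 i0) = -1 := by simp [hu₁, hp1, ← hdd, hm1]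
    have m2 := move_sub0 i0 u₁
    set u₂ := Function.update u₁ (p0 i0) (u₁ (p0 i0) - u₁ (p1 i0)) with hu₂
    have hu₂p0 : u₂ (p0 i0) = 0 := by simp [hu₂, hu₁p0, hu₁p1]
    have hu₂p1 : u₂ (p1 i0) = -1 := by
      simp [hu₂, Function.update_apply, p1_ne_p0, hu₁p1]
    have m3 := move_sub0 i0 u₂
    set u₃ := Function.update u₂ (p0 i0) (u₂ (p0 i0) - u₂ (p1 i0)) with hu₃
    have hu₃p0 : u₃ (p0 i0) = 1 := by simp [hu₃, hu₂p0, hu₂p1]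
    have hu₃p1 : u₃ (p1 i0) = -1 := by
      simp [hu₃, Function.update_apply, p1_ne_p0, hu₂p1]
    have m4 := move_add1 i0 u₃
    set u₄ := Function.update u₃ (p1 i0) (u₃ (p1 i0) + u₃ (p0 i0)) with hu₄
    have hu₄p0 : u₄ (p0 i0) = 1 := by
      simp [hu₄, Function.update_apply, p0_ne_p1, hu₃p0]
    have hu₄p1 : u₄ (p1 i0) = 0 := by simp [hu₄, hu₃p0, hu₃p1]
    have hout : ∀ k, k ≠ p0 i0 → k ≠ p1 i0 → u₄ k = w₂ k := by
      intro k h0 h1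
      simp [hu₄, hu₃, hu₂, hu₁, Function.update_apply, h0, h1]
    have : u₄ = Pi.single (p0 i0) 1 := by
      funext k
      by_cases hk : k = p0 i0
      · rw [hk, Pi.single_eq_same, hu₄p0]
      · rw [Pi.single_eq_of_ne hk]
        by_cases hk1 : k = p1 i0
        · rw [hk1, hu₄p1]
        · rw [hout k hk hk1]; exact hcoords k hk
    have hchain : Rel v u₄ :=
      rel_trans hrel (rel_trans m1 (rel_trans m2 (rel_trans m3 m4)))
    rwa [this] at hchain

end SpAux

/-- **Transitivity of `Sp(2g,ℤ)` on primitive vectors.**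
For every `g ≥ 1` and any two primitive vectors `v, w ∈ ℤ^{2g}` there is an
integral symplectic matrix `M` (invertible over `ℤ` and preserving the standard
symplectic form) with `M·v = w`. -/
theorem sp_transitive_on_primitive_vectors
    (g : ℕ) (hg : 1 ≤ g) (v w : Fin (2 * g) → ℤ)
    (hv : ∀ d : ℤ, (∀ i, d ∣ v i) → IsUnit d)
    (hw : ∀ d : ℤ, (∀ i, d ∣ w i) → IsUnit d) :
    ∃ M : Matrix (Fin (2 * g)) (Fin (2 * g)) ℤ,
      IsUnit M.det ∧
      (∀ x y : Fin (2 * g) → ℤ, stdSymp g (M.mulVec x) (M.mulVec y) = stdSymp g x y) ∧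
      M.mulVec v = w := by
  have h1 := SpAux.to_e0 hg v hv
  have h2 := SpAux.to_e0 hg w hw
  obtain ⟨M, ⟨hform, N, hMN, hNM⟩, hMv⟩ := SpAux.rel_trans h1 (SpAux.rel_symm h2)
  refine ⟨M, ?_, hform, hMv⟩
  exact IsUnit.of_mul_eq_one (a := M.det) N.det (by rw [← Matrix.det_mul, hMN, Matrix.det_one])
end

section
/- Let A and B be two skew-symmetric 4×4 integer matrices (Gram matrices of integral alternating bilinear forms on ℤ⁴) such that: the gcd of the entries of A is 1 and the gcd of the entries of B is 1 (the forms are indivisible), and Pf(A) = Pf(B) > 0, where Pf(M) = M₀₁·M₂₃ − M₀₂·M₁₃ + M₀₃·M₁₂ denotes the Pfaffian. Then there exists a matrix P ∈ GL(4,ℤ) with Pᵀ·A·P = B. In other words, two rank-four integral symplectic lattices with indivisible forms and equal determinants are isomorphic. -/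
open Matrix

/-- The Pfaffian of a skew-symmetric `4 × 4` matrix:
`Pf(A) = A₀₁·A₂₃ − A₀₂·A₁₃ + A₀₃·A₁₂`. -/
def pfaffian4 (A : Matrix (Fin 4) (Fin 4) ℤ) : ℤ :=
  A 0 1 * A 2 3 - A 0 2 * A 1 3 + A 0 3 * A 1 2

/-! ### Auxiliary development -/

/-- The generic skew-symmetric `4 × 4` integer matrix with upper entries
`a = A₀₁, b = A₀₂, c = A₀₃, d = A₁₂, e = A₁₃, f = A₂₃`. -/
def SkewM (a b c d e f : ℤ) : Matrix (Fin 4) (Fin 4) ℤ :=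
  !![0, a, b, c; -a, 0, d, e; -b, -d, 0, f; -c, -e, -f, 0]

/-- Integral congruence of `4 × 4` matrices. -/
def MEquiv (A B : Matrix (Fin 4) (Fin 4) ℤ) : Prop :=
  ∃ P : Matrix (Fin 4) (Fin 4) ℤ, IsUnit P.det ∧ Pᵀ * A * P = B

lemma MEquiv.trans {A B C : Matrix (Fin 4) (Fin 4) ℤ}
    (h₁ : MEquiv A B) (h₂ : MEquiv B C) : MEquiv A C := by
  obtain ⟨P, hP, rfl⟩ := h₁
  obtain ⟨Q, hQ, rfl⟩ := h₂
  refine ⟨P * Q, by rw [Matrix.det_mul]; exact hP.mul hQ, ?_⟩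
  rw [Matrix.transpose_mul]
  simp only [Matrix.mul_assoc]

lemma MEquiv.symm {A B : Matrix (Fin 4) (Fin 4) ℤ} (h : MEquiv A B) : MEquiv B A := by
  obtain ⟨P, hP, rfl⟩ := h
  have hPT : IsUnit Pᵀ.det := by rwa [Matrix.det_transpose]
  refine ⟨P⁻¹, Matrix.isUnit_nonsing_inv_det P hP, ?_⟩
  rw [Matrix.transpose_nonsing_inv]
  have h1 : (Pᵀ)⁻¹ * (Pᵀ * A * P) * P⁻¹ = ((Pᵀ)⁻¹ * Pᵀ) * A * (P * P⁻¹) := by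
    simp only [Matrix.mul_assoc]
  rw [h1, Matrix.nonsing_inv_mul _ hPT, Matrix.mul_nonsing_inv _ hP,
    Matrix.one_mul, Matrix.mul_one]

/-- Primitivity (unit gcd of the entries) of an integer matrix. -/
def Prim (M : Matrix (Fin 4) (Fin 4) ℤ) : Prop :=
  ∀ g : ℤ, (∀ i j, g ∣ M i j) → IsUnit g

lemma prim_mequiv {A B : Matrix (Fin 4) (Fin 4) ℤ}
    (h : MEquiv A B) (hA : Prim A) : Prim B := by
  obtain ⟨P, hP, hEq⟩ := h
  have hPT : IsUnit Pᵀ.det := by rwa [Matrix.det_transpose]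
  have hAeq : A = (Pᵀ)⁻¹ * B * P⁻¹ := by
    rw [← hEq]
    have h1 : (Pᵀ)⁻¹ * (Pᵀ * A * P) * P⁻¹ = ((Pᵀ)⁻¹ * Pᵀ) * A * (P * P⁻¹) := by
      simp only [Matrix.mul_assoc]
    rw [h1, Matrix.nonsing_inv_mul _ hPT, Matrix.mul_nonsing_inv _ hP,
      Matrix.one_mul, Matrix.mul_one]
  intro g hg
  apply hA
  intro i j
  rw [hAeq, Matrix.mul_apply]
  refine Finset.dvd_sum fun k _ => ?_
  refine Dvd.dvd.mul_right ?_ _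
  rw [Matrix.mul_apply]
  refine Finset.dvd_sum fun l _ => ?_
  exact Dvd.dvd.mul_left (hg l k) _

/-! ### Elementary congruence moves -/

section Moves

set_option maxHeartbeats 1000000

lemma mequiv_add21 (a b c d e f q : ℤ) :
    MEquiv (SkewM a b c d e f) (SkewM a (b + q*a) c d e (f + q*e)) := by
  refine ⟨!![1,0,0,0; 0,1,q,0; 0,0,1,0; 0,0,0,1], ?_, ?_⟩
  · simp [Int.isUnit_iff, Matrix.det_succ_row_zero, Fin.sum_univ_succ]
  · ext i j
    fin_cases i <;> fin_cases j <;>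
      simp [SkewM, Matrix.mul_apply, Matrix.transpose_apply, Fin.sum_univ_succ] <;> ring

lemma mequiv_add31 (a b c d e f q : ℤ) :
    MEquiv (SkewM a b c d e f) (SkewM a b (c + q*a) d e (f - q*d)) := by
  refine ⟨!![1,0,0,0; 0,1,0,q; 0,0,1,0; 0,0,0,1], ?_, ?_⟩
  · simp [Int.isUnit_iff, Matrix.det_succ_row_zero, Fin.sum_univ_succ]
  · ext i j
    fin_cases i <;> fin_cases j <;>
      simp [SkewM, Matrix.mul_apply, Matrix.transpose_apply, Fin.sum_univ_succ] <;> ring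

lemma mequiv_add20 (a b c d e f q : ℤ) :
    MEquiv (SkewM a b c d e f) (SkewM a b c (d - q*a) e (f + q*c)) := by
  refine ⟨!![1,0,q,0; 0,1,0,0; 0,0,1,0; 0,0,0,1], ?_, ?_⟩
  · simp [Int.isUnit_iff, Matrix.det_succ_row_zero, Fin.sum_univ_succ]
  · ext i j
    fin_cases i <;> fin_cases j <;>
      simp [SkewM, Matrix.mul_apply, Matrix.transpose_apply, Fin.sum_univ_succ] <;> ring

lemma mequiv_add30 (a b c d e f q : ℤ) :
    MEquiv (SkewM a b c d e f) (SkewM a b c d (e - q*a) (f - q*b)) := by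
  refine ⟨!![1,0,0,q; 0,1,0,0; 0,0,1,0; 0,0,0,1], ?_, ?_⟩
  · simp [Int.isUnit_iff, Matrix.det_succ_row_zero, Fin.sum_univ_succ]
  · ext i j
    fin_cases i <;> fin_cases j <;>
      simp [SkewM, Matrix.mul_apply, Matrix.transpose_apply, Fin.sum_univ_succ] <;> ring

lemma mequiv_add02 (a b c d e f q : ℤ) :
    MEquiv (SkewM a b c d e f) (SkewM (a - q*d) b (c + q*f) d e f) := by
  refine ⟨!![1,0,0,0; 0,1,0,0; q,0,1,0; 0,0,0,1], ?_, ?_⟩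
  · simp [Int.isUnit_iff, Matrix.det_succ_row_zero, Fin.sum_univ_succ]
  · ext i j
    fin_cases i <;> fin_cases j <;>
      simp [SkewM, Matrix.mul_apply, Matrix.transpose_apply, Fin.sum_univ_succ] <;> ring

lemma mequiv_swap12 (a b c d e f : ℤ) :
    MEquiv (SkewM a b c d e f) (SkewM b a c (-d) f e) := by
  refine ⟨!![1,0,0,0; 0,0,1,0; 0,1,0,0; 0,0,0,1], ?_, ?_⟩
  · simp [Int.isUnit_iff, Matrix.det_succ_row_zero, Fin.sum_univ_succ]
  · ext i j
    fin_cases i <;> fin_cases j <;>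
      simp [SkewM, Matrix.mul_apply, Matrix.transpose_apply, Fin.sum_univ_succ] <;> ring

lemma mequiv_swap13 (a b c d e f : ℤ) :
    MEquiv (SkewM a b c d e f) (SkewM c b a (-f) (-e) (-d)) := by
  refine ⟨!![1,0,0,0; 0,0,0,1; 0,0,1,0; 0,1,0,0], ?_, ?_⟩
  · simp [Int.isUnit_iff, Matrix.det_succ_row_zero, Fin.sum_univ_succ]
  · ext i j
    fin_cases i <;> fin_cases j <;>
      simp [SkewM, Matrix.mul_apply, Matrix.transpose_apply, Fin.sum_univ_succ] <;> ring

lemma mequiv_swap02 (a b c d e f : ℤ) :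
    MEquiv (SkewM a b c d e f) (SkewM (-d) (-b) f (-a) e c) := by
  refine ⟨!![0,0,1,0; 0,1,0,0; 1,0,0,0; 0,0,0,1], ?_, ?_⟩
  · simp [Int.isUnit_iff, Matrix.det_succ_row_zero, Fin.sum_univ_succ, Fin.succAbove_of_le_castSucc,
      Fin.succAbove_of_castSucc_lt]
  · ext i j
    fin_cases i <;> fin_cases j <;>
      simp [SkewM, Matrix.mul_apply, Matrix.transpose_apply, Fin.sum_univ_succ] <;> ring

lemma mequiv_swap03 (a b c d e f : ℤ) :
    MEquiv (SkewM a b c d e f) (SkewM (-e) (-f) (-c) d (-a) (-b)) := by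
  refine ⟨!![0,0,0,1; 0,1,0,0; 0,0,1,0; 1,0,0,0], ?_, ?_⟩
  · simp [Int.isUnit_iff, Matrix.det_succ_row_zero, Fin.sum_univ_succ, Fin.succAbove_of_le_castSucc,
      Fin.succAbove_of_castSucc_lt]
  · ext i j
    fin_cases i <;> fin_cases j <;>
      simp [SkewM, Matrix.mul_apply, Matrix.transpose_apply, Fin.sum_univ_succ] <;> ring

lemma mequiv_swap23 (a b c d e f : ℤ) :
    MEquiv (SkewM a b c d e f) (SkewM a c b e d (-f)) := by
  refine ⟨!![1,0,0,0; 0,1,0,0; 0,0,0,1; 0,0,1,0], ?_, ?_⟩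
  · simp [Int.isUnit_iff, Matrix.det_succ_row_zero, Fin.sum_univ_succ]
  · ext i j
    fin_cases i <;> fin_cases j <;>
      simp [SkewM, Matrix.mul_apply, Matrix.transpose_apply, Fin.sum_univ_succ] <;> ring

lemma mequiv_neg1 (a b c d e f : ℤ) :
    MEquiv (SkewM a b c d e f) (SkewM (-a) b c (-d) (-e) f) := by
  refine ⟨!![1,0,0,0; 0,-1,0,0; 0,0,1,0; 0,0,0,1], ?_, ?_⟩
  · simp [Int.isUnit_iff, Matrix.det_succ_row_zero, Fin.sum_univ_succ]
  · ext i j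
    fin_cases i <;> fin_cases j <;>
      simp [SkewM, Matrix.mul_apply, Matrix.transpose_apply, Fin.sum_univ_succ] <;> ring

end Moves

/-! ### Pfaffian and determinant of `SkewM` -/

lemma pf_skewM (a b c d e f : ℤ) :
    pfaffian4 (SkewM a b c d e f) = a*f - b*e + c*d := by
  simp [pfaffian4, SkewM]

set_option maxHeartbeats 1000000 in
lemma det_skewM (a b c d e f : ℤ) :
    (SkewM a b c d e f).det = (a*f - b*e + c*d)^2 := by
  simp [SkewM, Matrix.det_succ_row_zero, Fin.sum_univ_succ]
  simp [Fin.succAbove, Fin.lt_def]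
  ring

lemma mequiv_det {A B : Matrix (Fin 4) (Fin 4) ℤ} (h : MEquiv A B) : A.det = B.det := by
  obtain ⟨P, hu, rfl⟩ := h
  rw [Matrix.det_mul, Matrix.det_mul, Matrix.det_transpose]
  rcases Int.isUnit_iff.mp hu with h | h <;> rw [h] <;> ring

/-! ### Euclidean step -/

lemma euclid_step (a x : ℤ) (ha : a ≠ 0) (hx : ¬ a ∣ x) :
    ∃ q r : ℤ, x + q * a = r ∧ r ≠ 0 ∧ r.natAbs < a.natAbs := by
  refine ⟨-(x / a), x % a, by rw [Int.emod_def]; ring,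
    fun h0 => hx (Int.dvd_of_emod_eq_zero h0), ?_⟩
  have h1 := Int.emod_nonneg x ha
  have h2 : x % a < |a| := Int.emod_lt_abs _ ha
  rw [Int.abs_eq_natAbs] at h2
  omega

/-! ### Main reduction -/

lemma reduce : ∀ n : ℕ, ∀ a b c d e f : ℤ, Prim (SkewM a b c d e f) → a ≠ 0 →
    a.natAbs < n → ∃ m : ℤ, 0 ≤ m ∧ MEquiv (SkewM a b c d e f) (SkewM 1 0 0 0 0 m) := by
  intro n
  induction n with
  | zero => intro a b c d e f _ _ h; omega
  | succ n IH =>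
    intro a b c d e f hPrim ha hn
    by_cases hb : a ∣ b
    · by_cases hc : a ∣ c
      · by_cases hd : a ∣ d
        · by_cases he : a ∣ e
          · -- a divides b, c, d, e : clear them
            have hd0 : d - d / a * a = 0 := by
              rw [Int.ediv_mul_cancel hd]; ring
            have s1 : MEquiv (SkewM a b c d e f) (SkewM a b c 0 e (f + d/a*c)) := by
              have h := mequiv_add20 a b c d e f (d/a)
              rwa [hd0] at h
            have he0 : e - e / a * a = 0 := by
              rw [Int.ediv_mul_cancel he]; ring
            have s2 : MEquiv (SkewM a b c 0 e (f + d/a*c))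
                (SkewM a b c 0 0 (f + d/a*c - e/a*b)) := by
              have h := mequiv_add30 a b c 0 e (f + d/a*c) (e/a)
              rwa [he0] at h
            set f2 : ℤ := f + d/a*c - e/a*b with hf2def
            have hb0 : b + -(b / a) * a = 0 := by
              rw [neg_mul, Int.ediv_mul_cancel hb]; ring
            have s3 : MEquiv (SkewM a b c 0 0 f2) (SkewM a 0 c 0 0 f2) := by
              have h := mequiv_add21 a b c 0 0 f2 (-(b/a))
              rwa [hb0, mul_zero, add_zero] at h
            have hc0 : c + -(c / a) * a = 0 := by
              rw [neg_mul, Int.ediv_mul_cancel hc]; ring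
            have s4 : MEquiv (SkewM a 0 c 0 0 f2) (SkewM a 0 0 0 0 f2) := by
              have h := mequiv_add31 a 0 c 0 0 f2 (-(c/a))
              rwa [hc0, mul_zero, sub_zero] at h
            have sAll : MEquiv (SkewM a b c d e f) (SkewM a 0 0 0 0 f2) :=
              ((s1.trans s2).trans s3).trans s4
            have hPrim4 : Prim (SkewM a 0 0 0 0 f2) := prim_mequiv sAll hPrim
            by_cases hf : a ∣ f2
            · -- a divides everything, hence a = ±1
              have hdvd : ∀ i j, a ∣ (SkewM a 0 0 0 0 f2) i j := by
                intro i j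
                fin_cases i <;> fin_cases j <;>
                  simp [SkewM, dvd_neg, hf, Matrix.vecHead, Matrix.vecTail]
              have hu : IsUnit a := hPrim4 a hdvd
              rcases Int.isUnit_iff.mp hu with h1 | h1
              · subst h1
                rcases le_or_gt 0 f2 with hsgn | hsgn
                · exact ⟨f2, hsgn, sAll⟩
                · refine ⟨-f2, by omega, sAll.trans ?_⟩
                  have h := mequiv_swap23 1 0 0 0 0 f2
                  simpa using h
              · subst h1
                have s5 : MEquiv (SkewM (-1) 0 0 0 0 f2) (SkewM 1 0 0 0 0 f2) := by
                  have h := mequiv_neg1 (-1) 0 0 0 0 f2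
                  simpa using h
                rcases le_or_gt 0 f2 with hsgn | hsgn
                · exact ⟨f2, hsgn, sAll.trans s5⟩
                · refine ⟨-f2, by omega, (sAll.trans s5).trans ?_⟩
                  have h := mequiv_swap23 1 0 0 0 0 f2
                  simpa using h
            · -- a does not divide f2 : bring f2 next to a and reduce
              have s5 : MEquiv (SkewM a 0 0 0 0 f2) (SkewM a 0 f2 0 0 f2) := by
                have h := mequiv_add02 a 0 0 0 0 f2 1
                rwa [show a - 1*(0:ℤ) = a by ring, show (0:ℤ) + 1*f2 = f2 by ring] at h
              obtain ⟨q, r, hqr, hr0, hrlt⟩ := euclid_step a f2 ha hf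
              have s6 : MEquiv (SkewM a 0 f2 0 0 f2) (SkewM a 0 r 0 0 f2) := by
                have h := mequiv_add31 a 0 f2 0 0 f2 q
                rwa [show f2 + q*a = r from hqr, show f2 - q*(0:ℤ) = f2 by ring] at h
              have s7 : MEquiv (SkewM a 0 r 0 0 f2) (SkewM r 0 a (-f2) (-0) (-0)) :=
                mequiv_swap13 a 0 r 0 0 f2
              have sNew : MEquiv (SkewM a b c d e f) (SkewM r 0 a (-f2) (-0) (-0)) :=
                ((sAll.trans s5).trans s6).trans s7
              obtain ⟨m, hm, hEq⟩ := IH r 0 a (-f2) (-0) (-0)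
                (prim_mequiv sNew hPrim) hr0 (by omega)
              exact ⟨m, hm, sNew.trans hEq⟩
          · -- a ∤ e
            obtain ⟨q, r, hqr, hr0, hrlt⟩ := euclid_step a e ha he
            have s1 : MEquiv (SkewM a b c d e f) (SkewM a b c d r (f - (-q)*b)) := by
              have h := mequiv_add30 a b c d e f (-q)
              rwa [show e - (-q)*a = r by rw [← hqr]; ring] at h
            have s2 : MEquiv (SkewM a b c d r (f - (-q)*b))
                (SkewM (-r) (-(f - (-q)*b)) (-c) d (-a) (-b)) :=
              mequiv_swap03 a b c d r (f - (-q)*b)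
            have sNew := s1.trans s2
            obtain ⟨m, hm, hEq⟩ := IH (-r) (-(f - (-q)*b)) (-c) d (-a) (-b)
              (prim_mequiv sNew hPrim) (by omega)
              (by rw [Int.natAbs_neg]; omega)
            exact ⟨m, hm, sNew.trans hEq⟩
        · -- a ∤ d
          obtain ⟨q, r, hqr, hr0, hrlt⟩ := euclid_step a d ha hd
          have s1 : MEquiv (SkewM a b c d e f) (SkewM a b c r e (f + (-q)*c)) := by
            have h := mequiv_add20 a b c d e f (-q)
            rwa [show d - (-q)*a = r by rw [← hqr]; ring] at h
          have s2 : MEquiv (SkewM a b c r e (f + (-q)*c))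
              (SkewM (-r) (-b) (f + (-q)*c) (-a) e c) :=
            mequiv_swap02 a b c r e (f + (-q)*c)
          have sNew := s1.trans s2
          obtain ⟨m, hm, hEq⟩ := IH (-r) (-b) (f + (-q)*c) (-a) e c
            (prim_mequiv sNew hPrim) (by omega)
            (by rw [Int.natAbs_neg]; omega)
          exact ⟨m, hm, sNew.trans hEq⟩
      · -- a ∤ c
        obtain ⟨q, r, hqr, hr0, hrlt⟩ := euclid_step a c ha hc
        have s1 : MEquiv (SkewM a b c d e f) (SkewM a b r d e (f - q*d)) := by
          have h := mequiv_add31 a b c d e f q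
          rwa [hqr] at h
        have s2 : MEquiv (SkewM a b r d e (f - q*d))
            (SkewM r b a (-(f - q*d)) (-e) (-d)) :=
          mequiv_swap13 a b r d e (f - q*d)
        have sNew := s1.trans s2
        obtain ⟨m, hm, hEq⟩ := IH r b a (-(f - q*d)) (-e) (-d)
          (prim_mequiv sNew hPrim) hr0 (by omega)
        exact ⟨m, hm, sNew.trans hEq⟩
    · -- a ∤ b
      obtain ⟨q, r, hqr, hr0, hrlt⟩ := euclid_step a b ha hb
      have s1 : MEquiv (SkewM a b c d e f) (SkewM a r c d e (f + q*e)) := by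
        have h := mequiv_add21 a b c d e f q
        rwa [hqr] at h
      have s2 : MEquiv (SkewM a r c d e (f + q*e))
          (SkewM r a c (-d) (f + q*e) e) :=
        mequiv_swap12 a r c d e (f + q*e)
      have sNew := s1.trans s2
      obtain ⟨m, hm, hEq⟩ := IH r a c (-d) (f + q*e) e
        (prim_mequiv sNew hPrim) hr0 (by omega)
      exact ⟨m, hm, sNew.trans hEq⟩

lemma reduce' (a b c d e f : ℤ) (hPrim : Prim (SkewM a b c d e f)) :
    ∃ m : ℤ, 0 ≤ m ∧ MEquiv (SkewM a b c d e f) (SkewM 1 0 0 0 0 m) := by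
  by_cases ha : a ≠ 0
  · exact reduce (a.natAbs + 1) a b c d e f hPrim ha (Nat.lt_succ_self _)
  push_neg at ha; subst ha
  by_cases hbz : b ≠ 0
  · have s := mequiv_swap12 0 b c d e f
    obtain ⟨m, hm, hEq⟩ := reduce (b.natAbs + 1) b 0 c (-d) f e
      (prim_mequiv s hPrim) hbz (Nat.lt_succ_self _)
    exact ⟨m, hm, s.trans hEq⟩
  push_neg at hbz; subst hbz
  by_cases hcz : c ≠ 0
  · have s := mequiv_swap13 0 0 c d e f
    obtain ⟨m, hm, hEq⟩ := reduce (c.natAbs + 1) c 0 0 (-f) (-e) (-d)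
      (prim_mequiv s hPrim) hcz (Nat.lt_succ_self _)
    exact ⟨m, hm, s.trans hEq⟩
  push_neg at hcz; subst hcz
  by_cases hdz : d ≠ 0
  · have s := mequiv_swap02 0 0 0 d e f
    obtain ⟨m, hm, hEq⟩ := reduce (d.natAbs + 1) (-d) (-0) f (-0) e 0
      (prim_mequiv s hPrim) (by omega) (by rw [Int.natAbs_neg]; exact Nat.lt_succ_self _)
    exact ⟨m, hm, s.trans hEq⟩
  push_neg at hdz; subst hdz
  by_cases hez : e ≠ 0
  · have s := mequiv_swap03 0 0 0 0 e f
    obtain ⟨m, hm, hEq⟩ := reduce (e.natAbs + 1) (-e) (-f) (-0) 0 (-0) (-0)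
      (prim_mequiv s hPrim) (by omega) (by rw [Int.natAbs_neg]; exact Nat.lt_succ_self _)
    exact ⟨m, hm, s.trans hEq⟩
  push_neg at hez; subst hez
  by_cases hfz : f ≠ 0
  · have s1 := mequiv_swap02 0 0 0 0 0 f
    have s2 := mequiv_swap13 (-0) (-0) f (-0) 0 0
    have s := s1.trans s2
    obtain ⟨m, hm, hEq⟩ := reduce (f.natAbs + 1) f (-0) (-0) (-0) (-0) (- -0)
      (prim_mequiv s hPrim) hfz (Nat.lt_succ_self _)
    exact ⟨m, hm, s.trans hEq⟩
  push_neg at hfz; subst hfz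
  exfalso
  have hdvd : ∀ i j, (0:ℤ) ∣ (SkewM 0 0 0 0 0 0) i j := by
    intro i j; fin_cases i <;> fin_cases j <;>
      simp [SkewM, Matrix.vecHead, Matrix.vecTail]
  simpa using hPrim 0 hdvd

/-- **Classification of rank-four integral symplectic lattices.**
Two indivisible integral alternating forms on `ℤ⁴` (skew-symmetric integer
Gram matrices with unit gcd of entries) with equal positive Pfaffians are
isomorphic: there is `P ∈ GL(4,ℤ)` with `Pᵀ·A·P = B`. -/
theorem rank_four_symplectic_lattices_isomorphic
    (A B : Matrix (Fin 4) (Fin 4) ℤ)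
    (hA : Aᵀ = -A) (hB : Bᵀ = -B)
    (hAprim : ∀ d : ℤ, (∀ i j, d ∣ A i j) → IsUnit d)
    (hBprim : ∀ d : ℤ, (∀ i j, d ∣ B i j) → IsUnit d)
    (hPf : pfaffian4 A = pfaffian4 B)
    (hpos : 0 < pfaffian4 A) :
    ∃ P : Matrix (Fin 4) (Fin 4) ℤ, IsUnit P.det ∧ Pᵀ * A * P = B := by
  have hskA : ∀ i j : Fin 4, A j i = - A i j := fun i j => by
    simpa using congrFun (congrFun hA i) j
  have hskB : ∀ i j : Fin 4, B j i = - B i j := fun i j => by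
    simpa using congrFun (congrFun hB i) j
  have hAeq : A = SkewM (A 0 1) (A 0 2) (A 0 3) (A 1 2) (A 1 3) (A 2 3) := by
    have h00 := hskA 0 0; have h11 := hskA 1 1; have h22 := hskA 2 2
    have h33 := hskA 3 3; have h01 := hskA 0 1; have h02 := hskA 0 2
    have h03 := hskA 0 3; have h12 := hskA 1 2; have h13 := hskA 1 3
    have h23 := hskA 2 3
    ext i j
    fin_cases i <;> fin_cases j <;> simp [SkewM] <;> omega
  have hBeq : B = SkewM (B 0 1) (B 0 2) (B 0 3) (B 1 2) (B 1 3) (B 2 3) := by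
    have h00 := hskB 0 0; have h11 := hskB 1 1; have h22 := hskB 2 2
    have h33 := hskB 3 3; have h01 := hskB 0 1; have h02 := hskB 0 2
    have h03 := hskB 0 3; have h12 := hskB 1 2; have h13 := hskB 1 3
    have h23 := hskB 2 3
    ext i j
    fin_cases i <;> fin_cases j <;> simp [SkewM] <;> omega
  have hPA : Prim (SkewM (A 0 1) (A 0 2) (A 0 3) (A 1 2) (A 1 3) (A 2 3)) := by
    rw [← hAeq]; exact hAprim
  have hPB : Prim (SkewM (B 0 1) (B 0 2) (B 0 3) (B 1 2) (B 1 3) (B 2 3)) := by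
    rw [← hBeq]; exact hBprim
  obtain ⟨m, hm, hEqA⟩ := reduce' _ _ _ _ _ _ hPA
  obtain ⟨m', hm', hEqB⟩ := reduce' _ _ _ _ _ _ hPB
  -- identify m with the Pfaffian
  have keyA : (pfaffian4 A)^2 = m^2 := by
    have h := mequiv_det hEqA
    rw [det_skewM, det_skewM] at h
    rw [show ((1:ℤ)*m - 0*0 + 0*0) = m by ring] at h
    simpa [pfaffian4] using h
  have keyB : (pfaffian4 B)^2 = m'^2 := by
    have h := mequiv_det hEqB
    rw [det_skewM, det_skewM] at h
    rw [show ((1:ℤ)*m' - 0*0 + 0*0) = m' by ring] at h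
    simpa [pfaffian4] using h
  have hmA : m = pfaffian4 A := by
    have hz : (m - pfaffian4 A) * (m + pfaffian4 A) = 0 := by linear_combination -keyA
    rcases mul_eq_zero.mp hz with h | h
    · linarith
    · linarith
  have hmB : m' = pfaffian4 A := by
    have hposB : 0 < pfaffian4 B := hPf ▸ hpos
    have hz : (m' - pfaffian4 B) * (m' + pfaffian4 B) = 0 := by linear_combination -keyB
    rcases mul_eq_zero.mp hz with h | h
    · rw [← hPf] at h; linarith
    · rw [← hPf] at h; linarith
  rw [hmA] at hEqA
  rw [hmB] at hEqB
  have final : MEquiv A B := by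
    rw [hAeq, hBeq]
    exact hEqA.trans hEqB.symm
  exact final
end

section
/- Let g ≥ 1 and 1 ≤ k ≤ g. The real symplectic group Sp(2g,ℝ) acts transitively on the Hodge–Riemann k-planes: for any two complex k-dimensional Hodge–Riemann subspaces τ, τ' ⊆ ℂ^{2g} there exists a matrix S ∈ Sp(2g,ℝ) whose ℂ-linear extension to ℂ^{2g} maps τ onto τ'. -/
open scoped BigOperators

/-- A complex subspace `τ ⊆ ℂ^{2g}` is *Hodge–Riemann* if it is isotropic for
the standard symplectic form and `i·ω(x, x̄)` is a positive real number for
every nonzero `x ∈ τ`. -/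
def IsHodgeRiemann (g : ℕ) (τ : Submodule ℂ (Fin (2 * g) → ℂ)) : Prop :=
  (∀ x ∈ τ, ∀ y ∈ τ, stdSymp g x y = 0) ∧
  (∀ x ∈ τ, x ≠ 0 →
    ∃ r : ℝ, 0 < r ∧
      Complex.I * stdSymp g x (fun i => (starRingEnd ℂ) (x i)) = (r : ℂ))

namespace HR

open Finset

variable {R : Type*} [CommRing R] {g : ℕ}

/-- index `2a`. -/
def ev {g : ℕ} (i : Fin g) : Fin (2 * g) := ⟨2 * i.val, by have := i.isLt; omega⟩
/-- index `2a+1`. -/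
def od {g : ℕ} (i : Fin g) : Fin (2 * g) := ⟨2 * i.val + 1, by have := i.isLt; omega⟩

lemma stdSymp_def (x y : Fin (2 * g) → R) :
    stdSymp g x y = ∑ i : Fin g, (x (ev i) * y (od i) - x (od i) * y (ev i)) := rfl

/-- `stdSymp` as a bilinear map. -/
def sB (R : Type*) [CommRing R] (g : ℕ) :
    (Fin (2 * g) → R) →ₗ[R] (Fin (2 * g) → R) →ₗ[R] R :=
  LinearMap.mk₂ R (stdSymp g)
    (fun x x' y => by
      simp only [stdSymp_def, Pi.add_apply, ← Finset.sum_add_distrib]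
      exact Finset.sum_congr rfl fun i _ => by ring)
    (fun c x y => by
      simp only [stdSymp_def, Pi.smul_apply, smul_eq_mul, Finset.mul_sum]
      exact Finset.sum_congr rfl fun i _ => by ring)
    (fun x y y' => by
      simp only [stdSymp_def, Pi.add_apply, ← Finset.sum_add_distrib]
      exact Finset.sum_congr rfl fun i _ => by ring)
    (fun c x y => by
      simp only [stdSymp_def, Pi.smul_apply, smul_eq_mul, Finset.mul_sum]
      exact Finset.sum_congr rfl fun i _ => by ring)

@[simp] lemma sB_apply (x y : Fin (2 * g) → R) : sB R g x y = stdSymp g x y := rfl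

lemma stdSymp_antisymm (x y : Fin (2 * g) → R) : stdSymp g x y = - stdSymp g y x := by
  simp only [stdSymp_def, ← Finset.sum_neg_distrib]
  exact Finset.sum_congr rfl fun i _ => by ring

lemma stdSymp_self (x : Fin (2 * g) → R) : stdSymp g x x = 0 := by
  simp only [stdSymp_def]
  exact Finset.sum_eq_zero fun i _ => by ring

lemma stdSymp_map {S : Type*} [CommRing S] (f : R →+* S) (x y : Fin (2 * g) → R) :
    f (stdSymp g x y) = stdSymp g (fun i => f (x i)) (fun i => f (y i)) := by
  simp [stdSymp_def, map_sum]

/-- split a sum over `Fin (2*g)` into even/odd parts. -/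
lemma sum_split {M : Type*} [AddCommMonoid M] (f : Fin (2 * g) → M) :
    ∑ j, f j = ∑ i : Fin g, (f (ev i) + f (od i)) := by
  classical
  let e : Fin g × Fin 2 ≃ Fin (2 * g) :=
    { toFun := fun p => ⟨2 * p.1.val + p.2.val, by have := p.1.isLt; have := p.2.isLt; omega⟩
      invFun := fun j => (⟨j.val / 2, by have := j.isLt; omega⟩, ⟨j.val % 2, by omega⟩)
      left_inv := fun p => by
        have := p.2.isLt
        ext <;> simp <;> omega
      right_inv := fun j => by
        ext; simp; omega }
  rw [← Equiv.sum_comp e f, Fintype.sum_prod_type]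
  refine Finset.sum_congr rfl fun i _ => ?_
  rw [Fin.sum_univ_two]
  congr 1

lemma ev_ne_od (i b : Fin g) : ev i ≠ od b := by
  intro h
  have := congrArg Fin.val h
  simp only [ev, od] at this
  omega

lemma od_ne_ev (i b : Fin g) : od i ≠ ev b := by
  intro h
  have := congrArg Fin.val h
  simp only [ev, od] at this
  omega

lemma ev_inj_iff {i b : Fin g} : ev i = ev b ↔ i = b := by
  constructor
  · intro h
    have := congrArg Fin.val h
    simp only [ev] at this
    exact Fin.ext (by omega)
  · rintro rfl; rfl

lemma od_inj_iff {i b : Fin g} : od i = od b ↔ i = b := by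
  constructor
  · intro h
    have := congrArg Fin.val h
    simp only [od] at this
    exact Fin.ext (by omega)
  · rintro rfl; rfl

lemma stdSymp_single_od (x : Fin (2 * g) → R) (b : Fin g) :
    stdSymp g x (Pi.single (od b) (1 : R)) = x (ev b) := by
  rw [stdSymp_def, Finset.sum_eq_single b]
  · simp [Pi.single_apply, od_ne_ev]
  · intro i _ hib
    simp [Pi.single_apply, od_ne_ev, od_inj_iff, hib]
  · simp

lemma stdSymp_single_ev (x : Fin (2 * g) → R) (b : Fin g) :
    stdSymp g x (Pi.single (ev b) (1 : R)) = - x (od b) := by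
  rw [stdSymp_def, Finset.sum_eq_single b]
  · simp [Pi.single_apply, ev_ne_od]
  · intro i _ hib
    simp [Pi.single_apply, ev_ne_od, ev_inj_iff, hib]
  · simp

/-- every index of `Fin (2*g)` is an `ev` or an `od`. -/
lemma ev_or_od (j : Fin (2 * g)) : (∃ i, j = ev i) ∨ (∃ i, j = od i) := by
  by_cases h : j.val % 2 = 0
  · exact Or.inl ⟨⟨j.val / 2, by have := j.isLt; omega⟩, by apply Fin.ext; simp [ev]; omega⟩
  · exact Or.inr ⟨⟨j.val / 2, by have := j.isLt; omega⟩, by apply Fin.ext; simp [od]; omega⟩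

lemma stdSymp_nondegenerate {F : Type*} [Field F] (x : Fin (2 * g) → F) (hx : x ≠ 0) :
    ∃ z, stdSymp g x z ≠ 0 := by
  obtain ⟨j, hj⟩ : ∃ j, x j ≠ 0 := by
    by_contra h
    push_neg at h
    exact hx (funext h)
  rcases ev_or_od j with ⟨i, rfl⟩ | ⟨i, rfl⟩
  · exact ⟨Pi.single (od i) 1, by rwa [stdSymp_single_od]⟩
  · exact ⟨Pi.single (ev i) 1, by rw [stdSymp_single_ev]; simpa⟩

end HR

section D
open Finset
namespace HR
variable {g k : ℕ}

/-- a partial symplectic family. -/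
def IsSympFamily (g k : ℕ) (u v : Fin k → (Fin (2 * g) → ℝ)) : Prop :=
  ∀ a b, stdSymp g (u a) (u b) = 0 ∧ stdSymp g (v a) (v b) = 0 ∧
    stdSymp g (u a) (v b) = (if a = b then 1 else 0)

lemma IsSympFamily.vu {u v : Fin k → (Fin (2 * g) → ℝ)} (h : IsSympFamily g k u v)
    (a b : Fin k) : stdSymp g (v a) (u b) = -(if a = b then 1 else 0) := by
  rw [stdSymp_antisymm, (h b a).2.2]
  by_cases hab : a = b <;> simp [hab, eq_comm, hab]

/-- projection onto the symplectic complement of the span of a symplectic family. -/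
def proj (u v : Fin k → (Fin (2 * g) → ℝ)) (y : Fin (2 * g) → ℝ) : Fin (2 * g) → ℝ :=
  y - ∑ a, (stdSymp g y (v a)) • u a + ∑ a, (stdSymp g y (u a)) • v a

lemma proj_orth_u {u v : Fin k → (Fin (2 * g) → ℝ)} (h : IsSympFamily g k u v)
    (y : Fin (2 * g) → ℝ) (b : Fin k) : stdSymp g (proj u v y) (u b) = 0 := by
  have : stdSymp g (proj u v y) (u b) = sB ℝ g (proj u v y) (u b) := rfl
  rw [this, proj, map_add, map_sub, map_sum, map_sum]
  simp only [map_smul, LinearMap.add_apply, LinearMap.sub_apply, LinearMap.sum_apply,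
    LinearMap.smul_apply, smul_eq_mul, sB_apply]
  have h1 : ∑ a, stdSymp g y (v a) * stdSymp g (u a) (u b) = 0 :=
    Finset.sum_eq_zero fun a _ => by rw [(h a b).1, mul_zero]
  have h2 : ∑ a, stdSymp g y (u a) * stdSymp g (v a) (u b) = - stdSymp g y (u b) := by
    have : ∀ a ∈ Finset.univ, stdSymp g y (u a) * stdSymp g (v a) (u b)
        = if a = b then -(stdSymp g y (u a)) else 0 := by
      intro a _
      rw [h.vu a b]
      by_cases hab : a = b <;> simp [hab]
    rw [Finset.sum_congr rfl this, Finset.sum_ite_eq']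
    simp
  rw [h1, h2]
  ring

lemma proj_orth_v {u v : Fin k → (Fin (2 * g) → ℝ)} (h : IsSympFamily g k u v)
    (y : Fin (2 * g) → ℝ) (b : Fin k) : stdSymp g (proj u v y) (v b) = 0 := by
  have : stdSymp g (proj u v y) (v b) = sB ℝ g (proj u v y) (v b) := rfl
  rw [this, proj, map_add, map_sub, map_sum, map_sum]
  simp only [map_smul, LinearMap.add_apply, LinearMap.sub_apply, LinearMap.sum_apply,
    LinearMap.smul_apply, smul_eq_mul, sB_apply]
  have h1 : ∑ a, stdSymp g y (v a) * stdSymp g (u a) (v b) = stdSymp g y (v b) := by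
    have : ∀ a ∈ Finset.univ, stdSymp g y (v a) * stdSymp g (u a) (v b)
        = if a = b then stdSymp g y (v a) else 0 := by
      intro a _
      rw [(h a b).2.2]
      by_cases hab : a = b <;> simp [hab]
    rw [Finset.sum_congr rfl this, Finset.sum_ite_eq']
    simp
  have h2 : ∑ a, stdSymp g y (u a) * stdSymp g (v a) (v b) = 0 :=
    Finset.sum_eq_zero fun a _ => by rw [(h a b).2.1, mul_zero]
  rw [h1, h2]
  ring

/-- if `w` is orthogonal to the family, pairing with `proj z` equals pairing with `z`. -/
lemma stdSymp_proj_right {u v : Fin k → (Fin (2 * g) → ℝ)} (w z : Fin (2 * g) → ℝ)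
    (hwu : ∀ a, stdSymp g w (u a) = 0) (hwv : ∀ a, stdSymp g w (v a) = 0) :
    stdSymp g w (proj u v z) = stdSymp g w z := by
  have : stdSymp g w (proj u v z) = sB ℝ g w (proj u v z) := rfl
  rw [this, proj, map_add, map_sub, map_sum, map_sum]
  simp only [map_smul, smul_eq_mul, sB_apply]
  rw [Finset.sum_eq_zero fun a _ => by rw [hwu a, mul_zero],
    Finset.sum_eq_zero fun a _ => by rw [hwv a, mul_zero]]
  ring

/-- key step: a too-small symplectic family admits a new symplectic pair orthogonal to it. -/
lemma witt_step (hkg : k < g) (u v : Fin k → (Fin (2 * g) → ℝ))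
    (h : IsSympFamily g k u v) :
    ∃ w z : Fin (2 * g) → ℝ, stdSymp g w z = 1 ∧
      (∀ a, stdSymp g w (u a) = 0 ∧ stdSymp g w (v a) = 0 ∧
        stdSymp g z (u a) = 0 ∧ stdSymp g z (v a) = 0) := by
  classical
  -- find y with proj y ≠ 0
  obtain ⟨y, hy⟩ : ∃ y, proj u v y ≠ 0 := by
    by_contra hcon
    push_neg at hcon
    have hmem : ∀ y : Fin (2 * g) → ℝ, y ∈ Submodule.span ℝ (Set.range (Sum.elim u v)) := by
      intro y
      have h0 := hcon y
      rw [proj] at h0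
      have : y = ∑ a, (stdSymp g y (v a)) • u a - ∑ a, (stdSymp g y (u a)) • v a := by
        have := sub_eq_zero.mpr h0.symm
        linear_combination (norm := abel) h0
      rw [this]
      apply sub_mem
      · exact Submodule.sum_mem _ fun a _ => Submodule.smul_mem _ _
          (Submodule.subset_span ⟨Sum.inl a, rfl⟩)
      · exact Submodule.sum_mem _ fun a _ => Submodule.smul_mem _ _
          (Submodule.subset_span ⟨Sum.inr a, rfl⟩)
    have htop : Submodule.span ℝ (Set.range (Sum.elim u v)) = ⊤ :=
      eq_top_iff.mpr fun y _ => hmem y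
    have hle := finrank_span_le_card (R := ℝ) (Set.range (Sum.elim u v))
    rw [htop] at hle
    have h1 : Module.finrank ℝ (⊤ : Submodule ℝ (Fin (2 * g) → ℝ)) = 2 * g := by
      rw [finrank_top, Module.finrank_pi, Fintype.card_fin]
    have h2 : (Set.range (Sum.elim u v)).toFinset.card ≤ 2 * k := by
      rw [Set.toFinset_range]
      calc (Finset.image (Sum.elim u v) Finset.univ).card
          ≤ (Finset.univ : Finset (Fin k ⊕ Fin k)).card := Finset.card_image_le
        _ = 2 * k := by simp [Fintype.card_sum]; ring
    omega
  set w := proj u v y with hw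
  have hwu : ∀ a, stdSymp g w (u a) = 0 := proj_orth_u h y
  have hwv : ∀ a, stdSymp g w (v a) = 0 := proj_orth_v h y
  obtain ⟨z0, hz0⟩ := stdSymp_nondegenerate w hy
  set z1 := proj u v z0 with hz1
  have hwz1 : stdSymp g w z1 = stdSymp g w z0 := stdSymp_proj_right w z0 hwu hwv
  have hz1u : ∀ a, stdSymp g z1 (u a) = 0 := proj_orth_u h z0
  have hz1v : ∀ a, stdSymp g z1 (v a) = 0 := proj_orth_v h z0
  refine ⟨w, (stdSymp g w z0)⁻¹ • z1, ?_, fun a => ⟨hwu a, hwv a, ?_, ?_⟩⟩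
  · have : stdSymp g w ((stdSymp g w z0)⁻¹ • z1) = (stdSymp g w z0)⁻¹ * stdSymp g w z1 := by
      have : stdSymp g w ((stdSymp g w z0)⁻¹ • z1) = sB ℝ g w ((stdSymp g w z0)⁻¹ • z1) := rfl
      rw [this, map_smul, smul_eq_mul, sB_apply]
    rw [this, hwz1, inv_mul_cancel₀ hz0]
  · have : stdSymp g ((stdSymp g w z0)⁻¹ • z1) (u a)
        = (stdSymp g w z0)⁻¹ * stdSymp g z1 (u a) := by
      have : stdSymp g ((stdSymp g w z0)⁻¹ • z1) (u a)
          = sB ℝ g ((stdSymp g w z0)⁻¹ • z1) (u a) := rfl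
      rw [this, map_smul, LinearMap.smul_apply, smul_eq_mul, sB_apply]
    rw [this, hz1u a, mul_zero]
  · have : stdSymp g ((stdSymp g w z0)⁻¹ • z1) (v a)
        = (stdSymp g w z0)⁻¹ * stdSymp g z1 (v a) := by
      have : stdSymp g ((stdSymp g w z0)⁻¹ • z1) (v a)
          = sB ℝ g ((stdSymp g w z0)⁻¹ • z1) (v a) := rfl
      rw [this, map_smul, LinearMap.smul_apply, smul_eq_mul, sB_apply]
    rw [this, hz1v a, mul_zero]

end HR
end D
section E
open Finset
namespace HR
variable {g k : ℕ}

lemma witt_snoc {u v : Fin k → (Fin (2 * g) → ℝ)} (h : IsSympFamily g k u v)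
    {w z : Fin (2 * g) → ℝ} (hwz : stdSymp g w z = 1)
    (hrel : ∀ a, stdSymp g w (u a) = 0 ∧ stdSymp g w (v a) = 0 ∧
      stdSymp g z (u a) = 0 ∧ stdSymp g z (v a) = 0) :
    IsSympFamily g (k + 1) (Fin.snoc u w) (Fin.snoc v z) := by
  intro a b
  refine Fin.lastCases ?_ ?_ a <;> [skip; (intro a')] <;>
    (refine Fin.lastCases ?_ ?_ b <;> [skip; (intro b')]) <;>
    simp only [Fin.snoc_last, Fin.snoc_castSucc]
  · exact ⟨stdSymp_self w, stdSymp_self z, by simp [hwz]⟩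
  · have hne : Fin.last k ≠ Fin.castSucc b' := (Fin.castSucc_lt_last b').ne'
    exact ⟨(hrel b').1, (hrel b').2.2.2, by simp [hne, (hrel b').2.1]⟩
  · have hne : Fin.castSucc a' ≠ Fin.last k := (Fin.castSucc_lt_last a').ne
    refine ⟨by rw [stdSymp_antisymm, (hrel a').1, neg_zero],
      by rw [stdSymp_antisymm, (hrel a').2.2.2, neg_zero], ?_⟩
    rw [stdSymp_antisymm, (hrel a').2.2.1, neg_zero, if_neg hne]
  · refine ⟨(h a' b').1, (h a' b').2.1, ?_⟩
    rw [(h a' b').2.2]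
    by_cases hab : a' = b' <;> simp [hab, Fin.castSucc_inj]

lemma witt_extend (d : ℕ) :
    ∀ k (hk : k + d = g) (u v : Fin k → (Fin (2 * g) → ℝ)), IsSympFamily g k u v →
      ∃ U V : Fin g → (Fin (2 * g) → ℝ), IsSympFamily g g U V ∧
        ∀ a : Fin k, U (Fin.castLE (by omega) a) = u a ∧ V (Fin.castLE (by omega) a) = v a := by
  induction d with
  | zero =>
    intro k hk u v h
    have hkg : k = g := by omega
    subst hkg
    exact ⟨u, v, h, fun a => ⟨congrArg u (Fin.ext rfl), congrArg v (Fin.ext rfl)⟩⟩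
  | succ d ih =>
    intro k hk u v h
    obtain ⟨w, z, hwz, hrel⟩ := witt_step (by omega) u v h
    obtain ⟨U, V, hUV, hres⟩ := ih (k + 1) (by omega) _ _ (witt_snoc h hwz hrel)
    refine ⟨U, V, hUV, fun a => ?_⟩
    have e1 : (Fin.castLE (show k ≤ g by omega) a)
        = Fin.castLE (show k + 1 ≤ g by omega) (Fin.castSucc a) := Fin.ext rfl
    constructor
    · rw [e1, (hres (Fin.castSucc a)).1, Fin.snoc_castSucc]
    · rw [e1, (hres (Fin.castSucc a)).2, Fin.snoc_castSucc]

end HR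
end E
section F
open Finset
namespace HR
variable {g : ℕ}

lemma stdSymp_sum_pair_left (c d : Fin g → ℝ) (U V : Fin g → (Fin (2 * g) → ℝ))
    (wvec : Fin (2 * g) → ℝ) :
    stdSymp g (∑ i : Fin g, (c i • U i + d i • V i)) wvec
      = ∑ i : Fin g, (c i * stdSymp g (U i) wvec + d i * stdSymp g (V i) wvec) := by
  show sB ℝ g _ _ = _
  rw [map_sum, LinearMap.sum_apply]
  exact Finset.sum_congr rfl fun i _ => by
    simp only [map_add, map_smul, LinearMap.add_apply, LinearMap.smul_apply,
      smul_eq_mul, sB_apply]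

/-- interleaved column family. -/
def colFam (U V : Fin g → (Fin (2 * g) → ℝ)) (j : Fin (2 * g)) : Fin (2 * g) → ℝ :=
  if _ : j.val % 2 = 0 then U ⟨j.val / 2, by have := j.isLt; omega⟩
  else V ⟨j.val / 2, by have := j.isLt; omega⟩

lemma colFam_ev (U V : Fin g → (Fin (2 * g) → ℝ)) (i : Fin g) :
    colFam U V (ev i) = U i := by
  simp only [colFam, ev]
  simp only [show (2 * i.val) % 2 = 0 by omega, ↓reduceDIte]
  exact congrArg U (Fin.ext (show (2 * i.val) / 2 = i.val by omega))

lemma colFam_od (U V : Fin g → (Fin (2 * g) → ℝ)) (i : Fin g) :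
    colFam U V (od i) = V i := by
  simp only [colFam, od]
  simp only [show ¬(2 * i.val + 1) % 2 = 0 by omega, ↓reduceDIte]
  exact congrArg V (Fin.ext (show (2 * i.val + 1) / 2 = i.val by omega))

/-- matrix whose columns are the interleaved family. -/
def sympMat (U V : Fin g → (Fin (2 * g) → ℝ)) : Matrix (Fin (2 * g)) (Fin (2 * g)) ℝ :=
  Matrix.of fun i j => colFam U V j i

lemma sympMat_mulVec (U V : Fin g → (Fin (2 * g) → ℝ)) (x : Fin (2 * g) → ℝ) :
    (sympMat U V).mulVec x = ∑ i : Fin g, (x (ev i) • U i + x (od i) • V i) := by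
  funext r
  have h1 : (sympMat U V).mulVec x r = ∑ j, colFam U V j r * x j := by
    simp [Matrix.mulVec, dotProduct, sympMat, mul_comm]
  rw [h1, sum_split (fun j => colFam U V j r * x j), Finset.sum_apply]
  refine Finset.sum_congr rfl fun i _ => ?_
  simp [colFam_ev, colFam_od, mul_comm]

lemma sympMat_preserves {U V : Fin g → (Fin (2 * g) → ℝ)} (h : IsSympFamily g g U V)
    (x y : Fin (2 * g) → ℝ) :
    stdSymp g ((sympMat U V).mulVec x) ((sympMat U V).mulVec y) = stdSymp g x y := by
  have key : ∀ (i b : Fin g),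
      x (ev i) * stdSymp g (U i) ((sympMat U V).mulVec y)
        + x (od i) * stdSymp g (V i) ((sympMat U V).mulVec y)
      = x (ev i) * y (od i) - x (od i) * y (ev i) := by
    intro i b
    have hU : stdSymp g (U i) ((sympMat U V).mulVec y) = y (od i) := by
      rw [sympMat_mulVec]
      have : stdSymp g (U i) (∑ b : Fin g, (y (ev b) • U b + y (od b) • V b))
          = ∑ b : Fin g, (y (ev b) * stdSymp g (U i) (U b)
              + y (od b) * stdSymp g (U i) (V b)) := by
        show sB ℝ g _ _ = _
        rw [map_sum]
        exact Finset.sum_congr rfl fun b _ => by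
          simp only [map_add, map_smul, smul_eq_mul, sB_apply]
      rw [this, Finset.sum_congr rfl fun b _ => ?_, Finset.sum_ite_eq' Finset.univ i
        (fun b => y (od b))]
      · simp
      · rw [(h i b).1, (h i b).2.2, mul_zero, zero_add, mul_comm]
        by_cases hib : i = b
        · subst hib; simp
        · simp [hib, Ne.symm hib]
    have hV : stdSymp g (V i) ((sympMat U V).mulVec y) = - y (ev i) := by
      rw [sympMat_mulVec]
      have : stdSymp g (V i) (∑ b : Fin g, (y (ev b) • U b + y (od b) • V b))
          = ∑ b : Fin g, (y (ev b) * stdSymp g (V i) (U b)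
              + y (od b) * stdSymp g (V i) (V b)) := by
        show sB ℝ g _ _ = _
        rw [map_sum]
        exact Finset.sum_congr rfl fun b _ => by
          simp only [map_add, map_smul, smul_eq_mul, sB_apply]
      rw [this, Finset.sum_congr rfl fun b _ => ?_, Finset.sum_ite_eq' Finset.univ i
        (fun b => - y (ev b))]
      · simp
      · rw [h.vu i b, (h i b).2.1, mul_zero, add_zero]
        by_cases hib : i = b
        · subst hib; simp
        · simp [hib, Ne.symm hib]
    rw [hU, hV]
    ring
  conv_lhs => rw [show (sympMat U V).mulVec x
    = ∑ i : Fin g, (x (ev i) • U i + x (od i) • V i) from sympMat_mulVec U V x]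
  rw [stdSymp_sum_pair_left, stdSymp_def]
  exact Finset.sum_congr rfl fun i _ => key i i

lemma sympMat_isUnit_det (hg : 0 < g) {U V : Fin g → (Fin (2 * g) → ℝ)} (h : IsSympFamily g g U V) :
    IsUnit (sympMat U V).det := by
  classical
  haveI : Nonempty (Fin (2 * g)) := ⟨⟨0, by omega⟩⟩
  have hli : LinearIndependent ℝ (colFam U V) := by
    rw [Fintype.linearIndependent_iff]
    intro c hc
    have hsum : ∑ i : Fin g, (c (ev i) • U i + c (od i) • V i) = 0 := by
      rw [← hc, sum_split (fun j => c j • colFam U V j)]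
      exact (Finset.sum_congr rfl fun i _ => by rw [colFam_ev, colFam_od]).symm
    have hev : ∀ b, c (ev b) = 0 := by
      intro b
      have h0 : stdSymp g (∑ i : Fin g, (c (ev i) • U i + c (od i) • V i)) (V b) = 0 := by
        rw [hsum]; show sB ℝ g 0 (V b) = 0; rw [map_zero]; rfl
      rw [stdSymp_sum_pair_left] at h0
      rw [Finset.sum_congr rfl (fun i _ => ?_), Finset.sum_ite_eq' Finset.univ b
        (fun i => c (ev i))] at h0
      · simpa using h0
      · rw [(h i b).2.2, (h i b).2.1, mul_zero, add_zero, mul_comm]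
        by_cases hib : i = b <;> simp [hib]
    have hod : ∀ b, c (od b) = 0 := by
      intro b
      have h0 : stdSymp g (∑ i : Fin g, (c (ev i) • U i + c (od i) • V i)) (U b) = 0 := by
        rw [hsum]; show sB ℝ g 0 (U b) = 0; rw [map_zero]; rfl
      rw [stdSymp_sum_pair_left] at h0
      rw [Finset.sum_congr rfl (fun i _ => ?_), Finset.sum_ite_eq' Finset.univ b
        (fun i => - c (od i))] at h0
      · simpa using h0
      · rw [(h i b).1, h.vu i b, mul_zero, zero_add]
        by_cases hib : i = b <;> simp [hib]
    intro j
    rcases ev_or_od j with ⟨i, rfl⟩ | ⟨i, rfl⟩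
    · exact hev i
    · exact hod i
  -- columns span everything
  have hcard : Fintype.card (Fin (2 * g)) = Module.finrank ℝ (Fin (2 * g) → ℝ) := by
    rw [Module.finrank_pi]
  let b := basisOfLinearIndependentOfCardEqFinrank hli hcard
  have hb : ⇑b = colFam U V := coe_basisOfLinearIndependentOfCardEqFinrank hli hcard
  have hspan : Submodule.span ℝ (Set.range (colFam U V)) = ⊤ := by
    rw [← hb]; exact b.span_eq
  have hrange : LinearMap.range (sympMat U V).mulVecLin = ⊤ := by
    rw [Matrix.range_mulVecLin]
    have : (sympMat U V).col = colFam U V := rfl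
    rw [this]
    exact hspan
  have hsurj : Function.Surjective (sympMat U V).mulVecLin :=
    LinearMap.range_eq_top.mp hrange
  have hinj : Function.Injective (sympMat U V).mulVec := by
    have := (LinearMap.injective_iff_surjective (f := (sympMat U V).mulVecLin)).mpr hsurj
    exact this
  exact (Matrix.isUnit_iff_isUnit_det _).mp (Matrix.mulVec_injective_iff_isUnit.mp hinj)

end HR
end F
section G
open Finset ComplexConjugate
namespace HR
variable {g : ℕ}

lemma stdSymp_add_right {R : Type*} [CommRing R] (x y y' : Fin (2 * g) → R) :
    stdSymp g x (y + y') = stdSymp g x y + stdSymp g x y' := map_add (sB R g x) y y'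

lemma stdSymp_neg_right {R : Type*} [CommRing R] (x y : Fin (2 * g) → R) :
    stdSymp g x (-y) = - stdSymp g x y := map_neg (sB R g x) y

lemma stdSymp_smul_right {R : Type*} [CommRing R] (c : R) (x y : Fin (2 * g) → R) :
    stdSymp g x (c • y) = c * stdSymp g x y := map_smul (sB R g x) c y

lemma stdSymp_zero_left {R : Type*} [CommRing R] (y : Fin (2 * g) → R) :
    stdSymp g 0 y = 0 := by
  simp [stdSymp_def]

lemma stdSymp_re (p q : Fin (2 * g) → ℂ) :
    (stdSymp g p q).re = stdSymp g (fun i => (p i).re) (fun i => (q i).re)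
      - stdSymp g (fun i => (p i).im) (fun i => (q i).im) := by
  rw [stdSymp_def p q, Complex.re_sum, stdSymp_def, stdSymp_def, ← Finset.sum_sub_distrib]
  refine Finset.sum_congr rfl fun i _ => ?_
  simp only [Complex.sub_re, Complex.mul_re]
  ring

lemma stdSymp_im (p q : Fin (2 * g) → ℂ) :
    (stdSymp g p q).im = stdSymp g (fun i => (p i).re) (fun i => (q i).im)
      + stdSymp g (fun i => (p i).im) (fun i => (q i).re) := by
  rw [stdSymp_def p q, Complex.im_sum, stdSymp_def, stdSymp_def, ← Finset.sum_add_distrib]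
  refine Finset.sum_congr rfl fun i _ => ?_
  simp only [Complex.sub_im, Complex.mul_im]
  ring

/-- type copy of a submodule, to carry a custom inner-product structure. -/
def Wrap {g : ℕ} (τ : Submodule ℂ (Fin (2 * g) → ℂ)) : Type := ↥τ

noncomputable instance {g : ℕ} (τ : Submodule ℂ (Fin (2 * g) → ℂ)) : AddCommGroup (Wrap τ) :=
  inferInstanceAs (AddCommGroup ↥τ)

noncomputable instance {g : ℕ} (τ : Submodule ℂ (Fin (2 * g) → ℂ)) : Module ℂ (Wrap τ) :=
  inferInstanceAs (Module ℂ ↥τ)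

instance {g : ℕ} (τ : Submodule ℂ (Fin (2 * g) → ℂ)) : FiniteDimensional ℂ (Wrap τ) :=
  inferInstanceAs (FiniteDimensional ℂ ↥τ)

/-- coercion from the wrap to the ambient space. -/
def Wrap.amb {g : ℕ} {τ : Submodule ℂ (Fin (2 * g) → ℂ)} (x : Wrap τ) : Fin (2 * g) → ℂ :=
  (x : ↥τ).val

lemma Wrap.amb_mem {g : ℕ} {τ : Submodule ℂ (Fin (2 * g) → ℂ)} (x : Wrap τ) : x.amb ∈ τ :=
  (x : ↥τ).property

lemma Wrap.amb_add {g : ℕ} {τ : Submodule ℂ (Fin (2 * g) → ℂ)} (x y : Wrap τ) :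
    (x + y).amb = x.amb + y.amb := rfl

lemma Wrap.amb_smul {g : ℕ} {τ : Submodule ℂ (Fin (2 * g) → ℂ)} (r : ℂ) (x : Wrap τ) :
    (r • x).amb = r • x.amb := rfl

lemma Wrap.amb_eq_zero {g : ℕ} {τ : Submodule ℂ (Fin (2 * g) → ℂ)} {x : Wrap τ} :
    x.amb = 0 ↔ x = 0 := by
  constructor
  · intro h
    exact Subtype.ext h
  · rintro rfl
    rfl

lemma Wrap.finrank_eq {g : ℕ} (τ : Submodule ℂ (Fin (2 * g) → ℂ)) :
    Module.finrank ℂ (Wrap τ) = Module.finrank ℂ ↥τ := rfl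

/-- from a Hodge–Riemann `k`-plane, extract a symplectic family and a spanning set. -/
lemma hr_symp_family (g k : ℕ) (τ : Submodule ℂ (Fin (2 * g) → ℂ))
    (hτdim : Module.finrank ℂ τ = k) (hτ : IsHodgeRiemann g τ) :
    ∃ (xv : Fin k → (Fin (2 * g) → ℂ)) (u v : Fin k → (Fin (2 * g) → ℝ)),
      (∀ a i, xv a i = (u a i : ℂ) + (v a i : ℂ) * Complex.I) ∧
      IsSympFamily g k u v ∧
      Submodule.span ℂ (Set.range xv) = τ := by
  classical
  letI cd : InnerProductSpace.Core ℂ (Wrap τ) :=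
    { inner := fun x y =>
        (1 / 2) * (Complex.I * stdSymp g y.amb (fun i => conj (x.amb i)))
      conj_inner_symm := by
        intro x y
        show conj ((1 / 2 : ℂ) * (Complex.I * stdSymp g x.amb (fun i => conj (y.amb i))))
          = (1 / 2 : ℂ) * (Complex.I * stdSymp g y.amb (fun i => conj (x.amb i)))
        have hc : conj (stdSymp g x.amb (fun i => conj (y.amb i)))
            = stdSymp g (fun i => conj (x.amb i)) y.amb := by
          rw [stdSymp_map (starRingEnd ℂ)]
          congr 1
          funext i
          simp
        rw [map_mul]
        rw [show conj ((1 : ℂ) / 2) = 1 / 2 from by rw [map_div₀, map_one, map_ofNat]]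
        rw [map_mul, hc, stdSymp_antisymm, Complex.conj_I]
        ring
      re_inner_nonneg := by
        intro x
        by_cases hx : x.amb = 0
        · show 0 ≤ Complex.re ((1 / 2 : ℂ) * (Complex.I * stdSymp g x.amb _))
          rw [hx, stdSymp_zero_left]
          simp
        · obtain ⟨r, hr, hfx⟩ := hτ.2 x.amb x.amb_mem hx
          show 0 ≤ Complex.re ((1 / 2 : ℂ) * (Complex.I * stdSymp g x.amb
            (fun i => conj (x.amb i))))
          rw [hfx]
          norm_num
          positivity
      add_left := by
        intro x y z
        show (1 / 2 : ℂ) * (Complex.I * stdSymp g z.amb (fun i => conj ((x + y).amb i))) = _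
        have hfun : (fun i => conj ((x + y).amb i))
            = (fun i => conj (x.amb i)) + (fun i => conj (y.amb i)) := by
          funext i
          rw [Wrap.amb_add]
          simp
        rw [hfun, stdSymp_add_right]
        ring
      smul_left := by
        intro x y r
        show (1 / 2 : ℂ) * (Complex.I * stdSymp g y.amb (fun i => conj ((r • x).amb i))) = _
        have hfun : (fun i => conj ((r • x).amb i))
            = conj r • (fun i => conj (x.amb i)) := by
          funext i
          rw [Wrap.amb_smul]
          simp
        rw [hfun, stdSymp_smul_right]
        ring
      definite := by
        intro x hx
        by_contra hne
        have hxne : x.amb ≠ 0 := fun h => hne (Wrap.amb_eq_zero.mp h)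
        obtain ⟨r, hr, hfx⟩ := hτ.2 x.amb x.amb_mem hxne
        have h0 : ((1 / 2 : ℂ) * (Complex.I * stdSymp g x.amb
            (fun i => conj (x.amb i)))) = 0 := hx
        rw [hfx] at h0
        have : (r : ℂ) = 0 := by
          field_simp at h0
          simpa using h0
        exact hr.ne' (by exact_mod_cast this) }
  letI : NormedAddCommGroup (Wrap τ) := @InnerProductSpace.Core.toNormedAddCommGroup ℂ (Wrap τ) _ _ _ cd
  letI : InnerProductSpace ℂ (Wrap τ) := InnerProductSpace.ofCore cd.toCore
  let onb := stdOrthonormalBasis ℂ (Wrap τ)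
  have horth := onb.orthonormal
  rw [orthonormal_iff_ite] at horth
  have hfr : Module.finrank ℂ (Wrap τ) = k := by rw [Wrap.finrank_eq, hτdim]
  let cst : Fin k → Fin (Module.finrank ℂ (Wrap τ)) := fun a => Fin.cast hfr.symm a
  let xv : Fin k → (Fin (2 * g) → ℂ) := fun a => (onb (cst a)).amb
  have hmem : ∀ a, xv a ∈ τ := fun a => (onb (cst a)).amb_mem
  have hH : ∀ a b : Fin k, Complex.I * stdSymp g (xv b) (fun i => conj (xv a i))
      = if a = b then 2 else 0 := by
    intro a b
    have h1 := horth (cst a) (cst b)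
    have h2 : (inner ℂ (onb (cst a)) (onb (cst b)) : ℂ)
        = (1 / 2) * (Complex.I * stdSymp g (xv b) (fun i => conj (xv a i))) := rfl
    rw [h2] at h1
    have hcst : (cst a = cst b) ↔ (a = b) := by
      constructor
      · intro h
        have h' := congrArg (fun t : Fin (Module.finrank ℂ (Wrap τ)) => t.val) h
        exact Fin.ext h'
      · rintro rfl
        rfl
    rw [if_congr hcst rfl rfl] at h1
    have h3 := congrArg (fun z => (2 : ℂ) * z) h1
    rw [show (2 : ℂ) * ((1 / 2) * (Complex.I * stdSymp g (xv b) (fun i => conj (xv a i))))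
      = Complex.I * stdSymp g (xv b) (fun i => conj (xv a i)) by ring] at h3
    rw [h3]
    by_cases hab : a = b <;> simp [hab]
  have h0 : ∀ a b : Fin k, stdSymp g (xv a) (xv b) = 0 :=
    fun a b => hτ.1 _ (hmem a) _ (hmem b)
  set u : Fin k → (Fin (2 * g) → ℝ) := fun a => fun i => (xv a i).re with hu
  set v : Fin k → (Fin (2 * g) → ℝ) := fun a => fun i => (xv a i).im with hv
  have hfam : IsSympFamily g k u v := by
    intro a b
    have hreu : ∀ c, (fun i => (xv c i).re) = u c := fun _ => rfl
    have himv : ∀ c, (fun i => (xv c i).im) = v c := fun _ => rfl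
    have e1 := congrArg Complex.re (h0 a b)
    rw [stdSymp_re, Complex.zero_re] at e1
    have e2 := congrArg Complex.im (h0 a b)
    rw [stdSymp_im, Complex.zero_im] at e2
    have hcre : (fun i => (conj (xv a i)).re) = u a := by
      funext i
      exact Complex.conj_re _
    have hcim : (fun i => (conj (xv a i)).im) = -(v a) := by
      funext i
      exact Complex.conj_im _
    have e3 := congrArg Complex.re (hH a b)
    have e4 := congrArg Complex.im (hH a b)
    simp only [Complex.mul_re, Complex.mul_im, Complex.I_re, Complex.I_im,
      zero_mul, one_mul, zero_sub, zero_add] at e3 e4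
    rw [stdSymp_im, hcim, hcre, stdSymp_neg_right] at e3
    rw [stdSymp_re, hcim, hcre, stdSymp_neg_right] at e4
    rw [apply_ite Complex.re] at e3
    rw [apply_ite Complex.im] at e4
    simp only [hreu, himv] at e1 e2 e3 e4
    simp only [Complex.re_ofNat, Complex.zero_re, Complex.im_ofNat, Complex.zero_im] at e3 e4
    have a1 : stdSymp g (u b) (u a) = - stdSymp g (u a) (u b) := stdSymp_antisymm _ _
    have a2 : stdSymp g (v b) (v a) = - stdSymp g (v a) (v b) := stdSymp_antisymm _ _
    have a3 : stdSymp g (u b) (v a) = - stdSymp g (v a) (u b) := stdSymp_antisymm _ _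
    have a4 : stdSymp g (v b) (u a) = - stdSymp g (u a) (v b) := stdSymp_antisymm _ _
    refine ⟨?_, ?_, ?_⟩
    · by_cases hab : a = b
      · subst hab
        exact stdSymp_self _
      · simp only [hab, if_false] at e3 e4
        linarith
    · by_cases hab : a = b
      · subst hab
        exact stdSymp_self _
      · simp only [hab, if_false] at e3 e4
        linarith
    · by_cases hab : a = b
      · subst hab
        rw [if_pos rfl] at e3 ⊢
        linarith
      · rw [if_neg hab] at e3 ⊢
        linarith
  have hspan : Submodule.span ℂ (Set.range xv) = τ := by
    let onb' : Fin (Module.finrank ℂ (Wrap τ)) → ↥τ := fun j => onb j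
    have hxv : Set.range xv = ⇑τ.subtype '' Set.range (fun a => onb' (cst a)) := by
      rw [← Set.range_comp]
      rfl
    have hrange : Set.range (fun a => onb' (cst a)) = Set.range onb' := by
      ext z
      constructor
      · rintro ⟨a, rfl⟩
        exact ⟨cst a, rfl⟩
      · rintro ⟨j, rfl⟩
        exact ⟨Fin.cast hfr j, congrArg onb' (Fin.ext rfl)⟩
    have hspan2 : Submodule.span ℂ (Set.range onb') = (⊤ : Submodule ℂ ↥τ) := by
      have h := onb.toBasis.span_eq
      rw [OrthonormalBasis.coe_toBasis] at h
      exact h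
    calc Submodule.span ℂ (Set.range xv)
        = Submodule.map τ.subtype (Submodule.span ℂ (Set.range (fun a => onb' (cst a)))) := by
          rw [Submodule.map_span, ← hxv]
      _ = Submodule.map τ.subtype ⊤ := by rw [hrange, hspan2]
      _ = τ := Submodule.map_subtype_top τ
  exact ⟨xv, u, v, fun a i => (Complex.re_add_im (xv a i)).symm, hfam, hspan⟩

end HR
end G
section H
open Finset
namespace HR
variable {g k : ℕ}

/-- the standard Hodge–Riemann plane's spanning vectors. -/
def stdVec (g k : ℕ) (hkg : k ≤ g) (a : Fin k) : Fin (2 * g) → ℂ := fun j =>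
  if j = ev (Fin.castLE hkg a) then 1
  else if j = od (Fin.castLE hkg a) then Complex.I
  else 0

lemma sympMatC_mulVec (U V : Fin g → (Fin (2 * g) → ℝ)) (z : Fin (2 * g) → ℂ) :
    ((sympMat U V).map Complex.ofReal).mulVec z
      = ∑ i : Fin g, (z (ev i) • (fun r => (U i r : ℂ)) + z (od i) • (fun r => (V i r : ℂ))) := by
  funext r
  have h1 : ((sympMat U V).map Complex.ofReal).mulVec z r
      = ∑ j, (colFam U V j r : ℂ) * z j := by
    simp [Matrix.mulVec, dotProduct, sympMat, Matrix.map_apply, mul_comm]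
  rw [h1, sum_split (fun j => (colFam U V j r : ℂ) * z j), Finset.sum_apply]
  refine Finset.sum_congr rfl fun i _ => ?_
  rw [colFam_ev, colFam_od]
  simp [mul_comm]

lemma sympMatC_stdVec (hkg : k ≤ g) (U V : Fin g → (Fin (2 * g) → ℝ)) (a : Fin k) :
    ((sympMat U V).map Complex.ofReal).mulVec (stdVec g k hkg a)
      = fun r => ((U (Fin.castLE hkg a) r : ℂ) + (V (Fin.castLE hkg a) r : ℂ) * Complex.I) := by
  rw [sympMatC_mulVec]
  have hkey : ∀ i ∈ Finset.univ,
      (stdVec g k hkg a (ev i) • (fun r => (U i r : ℂ))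
        + stdVec g k hkg a (od i) • (fun r => (V i r : ℂ)))
      = if i = Fin.castLE hkg a
          then ((fun r => (U (Fin.castLE hkg a) r : ℂ))
            + Complex.I • (fun r => (V (Fin.castLE hkg a) r : ℂ)))
          else 0 := by
    intro i _
    by_cases hic : i = Fin.castLE hkg a
    · rw [if_pos hic, hic]
      have h1 : stdVec g k hkg a (ev (Fin.castLE hkg a)) = 1 := by
        simp [stdVec]
      have h2 : stdVec g k hkg a (od (Fin.castLE hkg a)) = Complex.I := by
        simp [stdVec, od_ne_ev]
      rw [h1, h2]
      funext r
      simp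
    · rw [if_neg hic]
      have h1 : stdVec g k hkg a (ev i) = 0 := by
        simp [stdVec, ev_ne_od, ev_inj_iff, hic]
      have h2 : stdVec g k hkg a (od i) = 0 := by
        simp [stdVec, od_ne_ev, od_inj_iff, hic]
      rw [h1, h2]
      funext r
      simp
  rw [Finset.sum_congr rfl hkey, Finset.sum_ite_eq' Finset.univ (Fin.castLE hkg a)]
  rw [if_pos (Finset.mem_univ _)]
  funext r
  simp
  ring

/-- main one-sided lemma: a symplectic matrix taking the standard plane to `τ`. -/
lemma exists_symp_to_plane (g k : ℕ) (hg : 1 ≤ g) (hkg : k ≤ g)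
    (τ : Submodule ℂ (Fin (2 * g) → ℂ))
    (hτdim : Module.finrank ℂ τ = k) (hτ : IsHodgeRiemann g τ) :
    ∃ S : Matrix (Fin (2 * g)) (Fin (2 * g)) ℝ,
      IsUnit S.det ∧
      (∀ x y : Fin (2 * g) → ℝ, stdSymp g (S.mulVec x) (S.mulVec y) = stdSymp g x y) ∧
      Submodule.map (S.map Complex.ofReal).mulVecLin
        (Submodule.span ℂ (Set.range (stdVec g k hkg))) = τ := by
  obtain ⟨xv, u, v, hxv, hfam, hspan⟩ := hr_symp_family g k τ hτdim hτ
  obtain ⟨U, V, hUV, hres⟩ := witt_extend (g - k) k (by omega) u v hfam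
  refine ⟨sympMat U V, sympMat_isUnit_det (by omega) hUV, sympMat_preserves hUV, ?_⟩
  rw [Submodule.map_span, ← Set.range_comp]
  have hcomp : (⇑(((sympMat U V).map Complex.ofReal).mulVecLin) ∘ stdVec g k hkg) = xv := by
    funext a
    have h1 : (((sympMat U V).map Complex.ofReal).mulVecLin) (stdVec g k hkg a)
        = ((sympMat U V).map Complex.ofReal).mulVec (stdVec g k hkg a) :=
      Matrix.mulVecLin_apply _ _
    show (((sympMat U V).map Complex.ofReal).mulVecLin) (stdVec g k hkg a) = xv a
    rw [h1, sympMatC_stdVec hkg U V a]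
    have hU : U (Fin.castLE hkg a) = u a := by
      have := (hres a).1
      convert this using 2
    have hV : V (Fin.castLE hkg a) = v a := by
      have := (hres a).2
      convert this using 2
    funext r
    rw [hU, hV, hxv a r]
  rw [hcomp, hspan]

end HR
end H
/-- **Transitivity of `Sp(2g,ℝ)` on Hodge–Riemann `k`-planes.**
For `1 ≤ k ≤ g` and any two `k`-dimensional Hodge–Riemann subspaces
`τ, τ' ⊆ ℂ^{2g}` there is a real symplectic matrix `S` whose `ℂ`-linear
extension maps `τ` onto `τ'`. -/
theorem sp_real_transitive_on_hodgeRiemann_planes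
    (g k : ℕ) (hg : 1 ≤ g) (hk : 1 ≤ k) (hkg : k ≤ g)
    (τ τ' : Submodule ℂ (Fin (2 * g) → ℂ))
    (hτdim : Module.finrank ℂ τ = k) (hτ'dim : Module.finrank ℂ τ' = k)
    (hτ : IsHodgeRiemann g τ) (hτ' : IsHodgeRiemann g τ') :
    ∃ S : Matrix (Fin (2 * g)) (Fin (2 * g)) ℝ,
      IsUnit S.det ∧
      (∀ x y : Fin (2 * g) → ℝ, stdSymp g (S.mulVec x) (S.mulVec y) = stdSymp g x y) ∧
      Submodule.map (S.map (Complex.ofReal)).mulVecLin τ = τ' := by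
  obtain ⟨S₁, h1det, h1symp, h1map⟩ := HR.exists_symp_to_plane g k hg hkg τ hτdim hτ
  obtain ⟨S₂, h2det, h2symp, h2map⟩ := HR.exists_symp_to_plane g k hg hkg τ' hτ'dim hτ'
  refine ⟨S₂ * S₁⁻¹, ?_, ?_, ?_⟩
  · rw [Matrix.det_mul]
    exact h2det.mul (Matrix.isUnit_nonsing_inv_det S₁ h1det)
  · intro x y
    rw [← Matrix.mulVec_mulVec, ← Matrix.mulVec_mulVec, h2symp]
    have hx : S₁.mulVec (S₁⁻¹.mulVec x) = x := by
      rw [Matrix.mulVec_mulVec, Matrix.mul_nonsing_inv S₁ h1det, Matrix.one_mulVec]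
    have hy : S₁.mulVec (S₁⁻¹.mulVec y) = y := by
      rw [Matrix.mulVec_mulVec, Matrix.mul_nonsing_inv S₁ h1det, Matrix.one_mulVec]
    calc stdSymp g (S₁⁻¹.mulVec x) (S₁⁻¹.mulVec y)
        = stdSymp g (S₁.mulVec (S₁⁻¹.mulVec x)) (S₁.mulVec (S₁⁻¹.mulVec y)) :=
          (h1symp _ _).symm
      _ = stdSymp g x y := by rw [hx, hy]
  · -- image claim
    have hmapmul : ∀ (A B : Matrix (Fin (2 * g)) (Fin (2 * g)) ℝ)
        (p : Submodule ℂ (Fin (2 * g) → ℂ)),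
        Submodule.map ((A * B).map Complex.ofReal).mulVecLin p
          = Submodule.map (A.map Complex.ofReal).mulVecLin
              (Submodule.map (B.map Complex.ofReal).mulVecLin p) := by
      intro A B p
      have h1 : (A * B).map Complex.ofReal
          = (A.map Complex.ofReal) * (B.map Complex.ofReal) := by
        have := Matrix.map_mul (L := A) (M := B) (f := Complex.ofRealHom)
        exact this
      rw [h1, Matrix.mulVecLin_mul, Submodule.map_comp]
    have hinvmap : Submodule.map ((S₁⁻¹).map Complex.ofReal).mulVecLin τ
        = Submodule.span ℂ (Set.range (HR.stdVec g k hkg)) := by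
      rw [← h1map, ← hmapmul]
      rw [Matrix.nonsing_inv_mul S₁ h1det]
      have hone : (1 : Matrix (Fin (2 * g)) (Fin (2 * g)) ℝ).map Complex.ofReal
          = (1 : Matrix (Fin (2 * g)) (Fin (2 * g)) ℂ) :=
        Matrix.map_one _ Complex.ofReal_zero Complex.ofReal_one
      rw [hone, Matrix.mulVecLin_one, Submodule.map_id]
    rw [hmapmul, hinvmap, h2map]
end
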